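/- arXiv:2011.03786 — 3 statements merged into one kernel-verified Lean document; each statement's English description precedes it below -/
import Mathlib

section
/- Let α ∈ (0,1) be an irrational number and let (qₙ) be the sequence of denominators of the convergents of the regular continued fraction expansion of α. Then the statistically characterized subgroup t^s_{(qₙ)}(𝕋) is uncountable. -/
open Filter Topology

noncomputable section

/-- The circle group `𝕋 = ℝ/ℤ`. -/
abbrev Circle1 : Type := AddCircle (1 : ℝ)

/-- A set of naturals has natural density zero. -/
def DensityZero (A : Set ℕ) : Prop :=
  Tendsto (fun n : ℕ => ((A ∩ Set.Icc 1 n).ncard : ℝ) / n) atTop (𝓝 0)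

/-- Statistical convergence to `0` of a sequence in the circle. -/
def StatTendstoZero (x : ℕ → Circle1) : Prop :=
  ∀ ε : ℝ, 0 < ε → DensityZero {n : ℕ | ε ≤ ‖x n‖}

/-- The characterized subgroup `t_(a_n)(𝕋)`. -/
def charSet (a : ℕ → ℤ) : Set Circle1 :=
  {x : Circle1 | Tendsto (fun n : ℕ => a n • x) atTop (𝓝 0)}

/-- The statistically characterized subgroup `t^s_(a_n)(𝕋)`. -/
def statCharSet (a : ℕ → ℤ) : Set Circle1 :=
  {x : Circle1 | StatTendstoZero (fun n : ℕ => a n • x)}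

namespace CF

/-- Gauss-map orbit of `α`: `G α 0 = α`, `G α (n+1) = {1 / G α n}`. -/
def G (α : ℝ) : ℕ → ℝ
  | 0 => α
  | n + 1 => Int.fract (G α n)⁻¹

/-- The partial quotients of the regular continued fraction `α = [0; a 1, a 2, …]`
(with the convention `a 0 = 0`). -/
def a (α : ℝ) : ℕ → ℕ
  | 0 => 0
  | n + 1 => ⌊(G α n)⁻¹⌋₊

/-- Denominators of the convergents of the continued fraction of `α`. -/
def q (α : ℝ) : ℕ → ℕ
  | 0 => 1
  | 1 => a α 1
  | (n + 2) => a α (n + 2) * q α (n + 1) + q α n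

/-- Numerators of the convergents of the continued fraction of `α`. -/
def p (α : ℝ) : ℕ → ℕ
  | 0 => 0
  | 1 => 1
  | (n + 2) => a α (n + 2) * p α (n + 1) + p α n

/-- `θ n = q n * α - p n`. -/
def θ (α : ℝ) (n : ℕ) : ℝ := (q α n : ℝ) * α - (p α n : ℝ)

variable {α : ℝ}

lemma G_prop (hα : α ∈ Set.Ioo (0:ℝ) 1) (hirr : Irrational α) :
    ∀ n, Irrational (G α n) ∧ G α n ∈ Set.Ioo (0:ℝ) 1 := by
  intro n
  induction n with
  | zero => exact ⟨hirr, hα⟩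
  | succ n ih =>
    obtain ⟨h1, h2, h3⟩ := ih
    have hinv : Irrational (G α n)⁻¹ := h1.inv
    have : G α (n+1) = Int.fract (G α n)⁻¹ := rfl
    rw [this]
    have hfr : Irrational (Int.fract (G α n)⁻¹) := by
      rw [Int.fract]
      exact hinv.sub_intCast _
    refine ⟨hfr, ?_, Int.fract_lt_one _⟩
    rcases lt_or_eq_of_le (Int.fract_nonneg (G α n)⁻¹) with h | h
    · exact h
    · exact absurd hfr.ne_zero (by simp [← h])

lemma G_irr (hα : α ∈ Set.Ioo (0:ℝ) 1) (hirr : Irrational α) (n : ℕ) : Irrational (G α n) :=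
  (G_prop hα hirr n).1

lemma G_pos (hα : α ∈ Set.Ioo (0:ℝ) 1) (hirr : Irrational α) (n : ℕ) : 0 < G α n :=
  (G_prop hα hirr n).2.1

lemma G_lt_one (hα : α ∈ Set.Ioo (0:ℝ) 1) (hirr : Irrational α) (n : ℕ) : G α n < 1 :=
  (G_prop hα hirr n).2.2

lemma a_real (hα : α ∈ Set.Ioo (0:ℝ) 1) (hirr : Irrational α) (n : ℕ) :
    (a α (n+1) : ℝ) = (G α n)⁻¹ - G α (n+1) := by
  have hpos : 0 < (G α n)⁻¹ := inv_pos.2 (G_pos hα hirr n)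
  have : G α (n+1) = Int.fract (G α n)⁻¹ := rfl
  rw [this, Int.fract]
  have : (a α (n+1) : ℝ) = (⌊(G α n)⁻¹⌋₊ : ℝ) := rfl
  rw [this, natCast_floor_eq_intCast_floor hpos.le]
  ring

lemma one_le_a (hα : α ∈ Set.Ioo (0:ℝ) 1) (hirr : Irrational α) (n : ℕ) :
    1 ≤ a α (n+1) := by
  have h1 : 1 < (G α n)⁻¹ := (one_lt_inv₀ (G_pos hα hirr n)).2 (G_lt_one hα hirr n)
  exact Nat.le_floor (by exact_mod_cast h1.le)


/-- Product of Gauss iterates. -/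
def D (α : ℝ) (n : ℕ) : ℝ := ∏ i ∈ Finset.range (n+1), G α i

lemma D_succ (n : ℕ) : D α (n+1) = D α n * G α (n+1) := Finset.prod_range_succ _ _

lemma D_pos (hα : α ∈ Set.Ioo (0:ℝ) 1) (hirr : Irrational α) (n : ℕ) : 0 < D α n :=
  Finset.prod_pos fun i _ => G_pos hα hirr i

lemma D_lt_one (hα : α ∈ Set.Ioo (0:ℝ) 1) (hirr : Irrational α) (n : ℕ) : D α n < 1 := by
  induction n with
  | zero => simpa [D] using (G_lt_one hα hirr 0)
  | succ n ih =>
    rw [D_succ]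
    nlinarith [D_pos hα hirr n, G_pos hα hirr (n+1), G_lt_one hα hirr (n+1)]

lemma D_antitone (hα : α ∈ Set.Ioo (0:ℝ) 1) (hirr : Irrational α) (n : ℕ) :
    D α (n+1) ≤ D α n := by
  rw [D_succ]
  nlinarith [D_pos hα hirr n, G_pos hα hirr (n+1), G_lt_one hα hirr (n+1)]

lemma theta_rec (n : ℕ) : θ α (n+2) = (a α (n+2) : ℝ) * θ α (n+1) + θ α n := by
  simp only [θ, q, p]
  push_cast
  ring

lemma theta_eq (hα : α ∈ Set.Ioo (0:ℝ) 1) (hirr : Irrational α) (n : ℕ) :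
    θ α n = (-1 : ℝ)^n * D α n := by
  have key : ∀ n : ℕ, θ α n = (-1:ℝ)^n * D α n ∧ θ α (n+1) = (-1:ℝ)^(n+1) * D α (n+1) := by
    intro n
    induction n with
    | zero =>
      constructor
      · simp [θ, q, p, D, G]
      · have h1 : θ α 1 = (a α 1 : ℝ) * α - 1 := by simp [θ, q, p]
        have h2 : (a α 1 : ℝ) = (G α 0)⁻¹ - G α 1 := a_real hα hirr 0
        have hg0 : G α 0 = α := rfl
        have hα0 : α ≠ 0 := hirr.ne_zero
        rw [h1, h2, hg0]
        have : D α 1 = α * G α 1 := by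
          rw [D_succ]; simp [D, G]
        rw [this]
        have key0 : (α⁻¹ - G α 1) * α = 1 - α * G α 1 := by field_simp
        linear_combination key0
    | succ n ih =>
      obtain ⟨ih1, ih2⟩ := ih
      refine ⟨ih2, ?_⟩
      rw [theta_rec, ih1, ih2]
      have h2 : (a α (n+2) : ℝ) = (G α (n+1))⁻¹ - G α (n+2) := a_real hα hirr (n+1)
      have hg : G α (n+1) ≠ 0 := (G_pos hα hirr (n+1)).ne'
      have hD1 : D α (n+1+1) = D α (n+1) * G α (n+1+1) := D_succ (n+1)
      have key : ((G α (n+1))⁻¹ - G α (n+2)) * G α (n+1) = 1 - G α (n+1) * G α (n+2) := by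
        field_simp
      rw [h2, hD1, D_succ n]
      linear_combination ((-1:ℝ)^(n+1) * D α n) * key
  exact (key n).1

lemma abs_theta (hα : α ∈ Set.Ioo (0:ℝ) 1) (hirr : Irrational α) (n : ℕ) :
    |θ α n| = D α n := by
  rw [theta_eq hα hirr, abs_mul, abs_pow, abs_neg, abs_one, one_pow, one_mul,
    abs_of_pos (D_pos hα hirr n)]

lemma det (n : ℕ) : (p α (n+1) : ℤ) * q α n - p α n * q α (n+1) = (-1)^n := by
  induction n with
  | zero => simp [p, q]
  | succ n ih =>
    have hp : (p α (n+2) : ℤ) = a α (n+2) * p α (n+1) + p α n := by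
      simp only [p]; push_cast; ring
    have hq : (q α (n+2) : ℤ) = a α (n+2) * q α (n+1) + q α n := by
      simp only [q]; push_cast; ring
    rw [hp, hq]
    linear_combination (-1 : ℤ) * ih

lemma key_identity (hα : α ∈ Set.Ioo (0:ℝ) 1) (hirr : Irrational α) (n : ℕ) :
    (q α (n+1) : ℝ) * D α n + (q α n : ℝ) * D α (n+1) = 1 := by
  have h1 : (q α (n+1) : ℝ) * θ α n - (q α n : ℝ) * θ α (n+1)
      = (p α (n+1) : ℝ) * q α n - (p α n : ℝ) * q α (n+1) := by
    simp only [θ]; ring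
  have h2 : (p α (n+1) : ℝ) * q α n - (p α n : ℝ) * q α (n+1) = (-1:ℝ)^n := by
    have := det (α := α) (n := n)
    exact_mod_cast congrArg (Int.cast : ℤ → ℝ) this
  rw [theta_eq hα hirr n, theta_eq hα hirr (n+1)] at h1
  have hpow : ((-1:ℝ)^n) ≠ 0 := by positivity
  have h3 : (-1:ℝ)^n * ((q α (n+1) : ℝ) * D α n + (q α n : ℝ) * D α (n+1)) = (-1:ℝ)^n * 1 := by
    linear_combination h1 + h2
  exact mul_left_cancel₀ hpow h3

lemma one_le_q (hα : α ∈ Set.Ioo (0:ℝ) 1) (hirr : Irrational α) (n : ℕ) : 1 ≤ q α n := by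
  have key : ∀ n, 1 ≤ q α n ∧ 1 ≤ q α (n+1) := by
    intro n
    induction n with
    | zero => exact ⟨le_refl 1, one_le_a hα hirr 0⟩
    | succ n ih =>
      refine ⟨ih.2, ?_⟩
      show 1 ≤ a α (n+2) * q α (n+1) + q α n
      have := ih.1
      omega
  exact (key n).1

lemma q_mono_succ (hα : α ∈ Set.Ioo (0:ℝ) 1) (hirr : Irrational α) (n : ℕ) :
    q α n ≤ q α (n+1) := by
  cases n with
  | zero =>
    show q α 0 ≤ q α 1
    simpa [q] using one_le_a hα hirr 0
  | succ n =>
    show q α (n+1) ≤ a α (n+2) * q α (n+1) + q α n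
    have h1 := one_le_a hα hirr (n+1)
    nlinarith [one_le_q hα hirr n, one_le_q hα hirr (n+1)]

lemma q_mono (hα : α ∈ Set.Ioo (0:ℝ) 1) (hirr : Irrational α) : Monotone (q α) :=
  monotone_nat_of_le_succ (q_mono_succ hα hirr)

lemma q_double (hα : α ∈ Set.Ioo (0:ℝ) 1) (hirr : Irrational α) (n : ℕ) :
    2 * q α n ≤ q α (n+2) := by
  show 2 * q α n ≤ a α (n+2) * q α (n+1) + q α n
  have h1 := one_le_a hα hirr (n+1)
  have h2 := q_mono_succ hα hirr n
  nlinarith [one_le_q hα hirr n]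

lemma q_growth (hα : α ∈ Set.Ioo (0:ℝ) 1) (hirr : Irrational α) (n k : ℕ) :
    2^k * q α n ≤ q α (n + 2*k) := by
  induction k with
  | zero => simp
  | succ k ih =>
    have h1 : 2 * q α (n + 2*k) ≤ q α (n + 2*k + 2) := q_double hα hirr _
    have : n + 2*(k+1) = n + 2*k + 2 := by ring
    rw [this, pow_succ]
    calc 2^k * 2 * q α n = 2 * (2^k * q α n) := by ring
      _ ≤ 2 * q α (n + 2*k) := by omega
      _ ≤ q α (n + 2*k + 2) := h1

lemma q_growth' (hα : α ∈ Set.Ioo (0:ℝ) 1) (hirr : Irrational α) {n m : ℕ} (h : n ≤ m) :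
    2^((m-n)/2) * q α n ≤ q α m := by
  have h1 : n + 2 * ((m-n)/2) ≤ m := by omega
  calc 2^((m-n)/2) * q α n ≤ q α (n + 2*((m-n)/2)) := q_growth hα hirr n _
    _ ≤ q α m := q_mono hα hirr h1

lemma D_le (hα : α ∈ Set.Ioo (0:ℝ) 1) (hirr : Irrational α) (n : ℕ) :
    D α n ≤ 1 / (q α (n+1) : ℝ) := by
  have hk := key_identity hα hirr n
  have h1 : (0:ℝ) < q α (n+1) := by exact_mod_cast one_le_q hα hirr (n+1)
  have h2 : (0:ℝ) ≤ (q α n : ℝ) * D α (n+1) :=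
    mul_nonneg (Nat.cast_nonneg _) (D_pos hα hirr (n+1)).le
  rw [le_div_iff₀ h1]
  linarith

lemma D_ge (hα : α ∈ Set.Ioo (0:ℝ) 1) (hirr : Irrational α) (n : ℕ) :
    1 / ((q α n : ℝ) + (q α (n+1) : ℝ)) ≤ D α n := by
  have hk := key_identity hα hirr n
  have h1 : (0:ℝ) < q α (n+1) := by exact_mod_cast one_le_q hα hirr (n+1)
  have h0 : (0:ℝ) < q α n := by exact_mod_cast one_le_q hα hirr n
  have hd := D_antitone hα hirr n
  rw [div_le_iff₀ (by linarith)]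
  nlinarith

lemma D_ge2 (hα : α ∈ Set.Ioo (0:ℝ) 1) (hirr : Irrational α) (n : ℕ) :
    1 / (2 * (q α (n+1) : ℝ)) ≤ D α n := by
  have h1 : (0:ℝ) < q α (n+1) := by exact_mod_cast one_le_q hα hirr (n+1)
  have h2 : (q α n : ℝ) ≤ q α (n+1) := by exact_mod_cast q_mono_succ hα hirr n
  have h0 : (0:ℝ) < q α n := by exact_mod_cast one_le_q hα hirr n
  calc 1 / (2 * (q α (n+1) : ℝ)) ≤ 1 / ((q α n : ℝ) + (q α (n+1) : ℝ)) := by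
        apply one_div_le_one_div_of_le (by linarith) (by linarith)
    _ ≤ D α n := D_ge hα hirr n


/-! ### The sparse sequence and the uncountable family -/

/-- Sparse index sequence. -/
def M (k : ℕ) : ℕ := (k+3)^2

/-- The real number attached to a set `S ⊆ ℕ`. -/
def Xr (α : ℝ) (S : Set ℕ) : ℝ := ∑' k, S.indicator (fun i => θ α (M i)) k

lemma M_lt_M (k : ℕ) : M k < M (k+1) := by
  simp only [M]
  exact Nat.pow_lt_pow_left (by omega) (by norm_num)

lemma q_pos_r (hα : α ∈ Set.Ioo (0:ℝ) 1) (hirr : Irrational α) (n : ℕ) :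
    (0:ℝ) < (q α n : ℝ) := by exact_mod_cast one_le_q hα hirr n

lemma qM_lower (hα : α ∈ Set.Ioo (0:ℝ) 1) (hirr : Irrational α) (k : ℕ) :
    2^(k+4) ≤ q α (M k + 1) := by
  have h1 : 2^((M k + 1)/2) * q α 0 ≤ q α (M k + 1) := q_growth' hα hirr (Nat.zero_le _)
  have hq0 : q α 0 = 1 := rfl
  have h2 : k + 4 ≤ (M k + 1)/2 := by
    have hM : M k + 1 = k*k + 6*k + 10 := by simp only [M]; ring
    obtain ⟨u, hu⟩ : ∃ u, k*k = u := ⟨_, rfl⟩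
    rw [hM, hu]
    omega
  calc 2^(k+4) ≤ 2^((M k + 1)/2) := Nat.pow_le_pow_right (by norm_num) h2
    _ = 2^((M k + 1)/2) * q α 0 := by rw [hq0, mul_one]
    _ ≤ q α (M k + 1) := h1

lemma qM_ratio (hα : α ∈ Set.Ioo (0:ℝ) 1) (hirr : Irrational α) (k : ℕ) :
    8 * q α (M k + 1) ≤ q α (M (k+1) + 1) := by
  have hle : M k + 1 ≤ M (k+1) + 1 := by have := M_lt_M k; omega
  have h1 : 2^((M (k+1) + 1 - (M k + 1))/2) * q α (M k + 1) ≤ q α (M (k+1) + 1) :=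
    q_growth' hα hirr hle
  have hgap : M (k+1) + 1 - (M k + 1) = 2*k + 7 := by
    simp only [M]
    have h1 : (k+1+3)^2 = (k+3)^2 + (2*k+7) := by ring
    omega
  have h2 : 3 ≤ (M (k+1) + 1 - (M k + 1))/2 := by rw [hgap]; omega
  calc 8 * q α (M k + 1) = 2^3 * q α (M k + 1) := by norm_num
    _ ≤ 2^((M (k+1) + 1 - (M k + 1))/2) * q α (M k + 1) :=
        Nat.mul_le_mul_right _ (Nat.pow_le_pow_right (by norm_num) h2)
    _ ≤ q α (M (k+1) + 1) := h1

lemma qM_ratio0 (hα : α ∈ Set.Ioo (0:ℝ) 1) (hirr : Irrational α) (k : ℕ) :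
    8 * q α (M k) ≤ q α (M (k+1)) := by
  have hle : M k ≤ M (k+1) := (M_lt_M k).le
  have h1 : 2^((M (k+1) - M k)/2) * q α (M k) ≤ q α (M (k+1)) := q_growth' hα hirr hle
  have hgap : M (k+1) - M k = 2*k + 7 := by
    simp only [M]
    have h1 : (k+1+3)^2 = (k+3)^2 + (2*k+7) := by ring
    omega
  have h2 : 3 ≤ (M (k+1) - M k)/2 := by rw [hgap]; omega
  calc 8 * q α (M k) = 2^3 * q α (M k) := by norm_num
    _ ≤ 2^((M (k+1) - M k)/2) * q α (M k) :=
        Nat.mul_le_mul_right _ (Nat.pow_le_pow_right (by norm_num) h2)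
    _ ≤ q α (M (k+1)) := h1

lemma qM_pow (hα : α ∈ Set.Ioo (0:ℝ) 1) (hirr : Irrational α) (N k : ℕ) :
    8^k * q α (M N + 1) ≤ q α (M (k+N) + 1) := by
  induction k with
  | zero => simp
  | succ k ih =>
    calc 8^(k+1) * q α (M N + 1) = 8 * (8^k * q α (M N + 1)) := by ring
      _ ≤ 8 * q α (M (k+N) + 1) := Nat.mul_le_mul_left _ ih
      _ ≤ q α (M (k+N+1) + 1) := qM_ratio hα hirr (k+N)
      _ = q α (M (k+1+N) + 1) := by ring_nf

lemma sum_qM (hα : α ∈ Set.Ioo (0:ℝ) 1) (hirr : Irrational α) (j : ℕ) :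
    ∑ k ∈ Finset.range (j+1), q α (M k) ≤ 2 * q α (M j) := by
  induction j with
  | zero => simp [Finset.sum_range_one]; omega
  | succ j ih =>
    rw [Finset.sum_range_succ]
    have h1 : 8 * q α (M j) ≤ q α (M (j+1)) := qM_ratio0 hα hirr j
    omega

/-- Bound on the individual (shifted) terms of `Xr`. -/
lemma ind_bound (hα : α ∈ Set.Ioo (0:ℝ) 1) (hirr : Irrational α) (S : Set ℕ) (N k : ℕ) :
    ‖S.indicator (fun i => θ α (M i)) (k+N)‖ ≤ (1/8:ℝ)^k * (1/(q α (M N + 1) : ℝ)) := by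
  have hqN : (0:ℝ) < (q α (M N + 1) : ℝ) := q_pos_r hα hirr _
  have hrhs : (0:ℝ) ≤ (1/8:ℝ)^k * (1/(q α (M N + 1) : ℝ)) := by positivity
  by_cases hk : (k+N) ∈ S
  · rw [Set.indicator_of_mem hk, Real.norm_eq_abs, abs_theta hα hirr]
    have h1 : D α (M (k+N)) ≤ 1 / (q α (M (k+N) + 1) : ℝ) := D_le hα hirr _
    have h2 : (8:ℝ)^k * (q α (M N + 1) : ℝ) ≤ (q α (M (k+N) + 1) : ℝ) := by
      exact_mod_cast qM_pow hα hirr N k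
    have h3 : (0:ℝ) < (8:ℝ)^k * (q α (M N + 1) : ℝ) := by positivity
    calc D α (M (k+N)) ≤ 1 / (q α (M (k+N) + 1) : ℝ) := h1
      _ ≤ 1 / ((8:ℝ)^k * (q α (M N + 1) : ℝ)) := by
          apply one_div_le_one_div_of_le h3 h2
      _ = (1/8:ℝ)^k * (1/(q α (M N + 1) : ℝ)) := by
          rw [div_pow, one_pow]
          field_simp
  · rw [Set.indicator_of_notMem hk, norm_zero]
    exact hrhs

lemma summable_geo8 : Summable (fun k : ℕ => (1/8:ℝ)^k) :=
  summable_geometric_of_lt_one (by norm_num) (by norm_num)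

lemma summable_ind (hα : α ∈ Set.Ioo (0:ℝ) 1) (hirr : Irrational α) (S : Set ℕ) :
    Summable (fun k => S.indicator (fun i => θ α (M i)) k) := by
  apply Summable.of_norm_bounded (g := fun k => (1/8:ℝ)^k * (1/(q α (M 0 + 1) : ℝ)))
    (summable_geo8.mul_right _)
  intro k
  simpa using ind_bound hα hirr S 0 k

lemma tail_bound (hα : α ∈ Set.Ioo (0:ℝ) 1) (hirr : Irrational α) (S : Set ℕ) (N : ℕ) :
    |∑' k, S.indicator (fun i => θ α (M i)) (k+N)| ≤ (8/7) * (1/(q α (M N + 1) : ℝ)) := by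
  have hqN : (0:ℝ) < (q α (M N + 1) : ℝ) := q_pos_r hα hirr _
  have hgs : Summable (fun k : ℕ => (1/8:ℝ)^k * (1/(q α (M N + 1) : ℝ))) :=
    summable_geo8.mul_right _
  have hb := ind_bound hα hirr S N
  calc |∑' k, S.indicator (fun i => θ α (M i)) (k+N)|
      ≤ ∑' k, (1/8:ℝ)^k * (1/(q α (M N + 1) : ℝ)) := by
        apply tsum_of_norm_bounded hgs.hasSum hb
    _ = (∑' k : ℕ, (1/8:ℝ)^k) * (1/(q α (M N + 1) : ℝ)) := tsum_mul_right
    _ = (8/7) * (1/(q α (M N + 1) : ℝ)) := by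
        rw [tsum_geometric_of_lt_one (by norm_num) (by norm_num)]
        norm_num

lemma tail_bound2 (hα : α ∈ Set.Ioo (0:ℝ) 1) (hirr : Irrational α) (S : Set ℕ) (N : ℕ) :
    |∑' k, S.indicator (fun i => θ α (M i)) (k+N)| ≤ 2 * (1/(q α (M N + 1) : ℝ)) := by
  have hqN : (0:ℝ) < (q α (M N + 1) : ℝ) := q_pos_r hα hirr _
  have h := tail_bound hα hirr S N
  have hx : (0:ℝ) < 1/(q α (M N + 1) : ℝ) := by positivity
  have h2 : (8/7:ℝ) * (1/(q α (M N + 1) : ℝ)) ≤ 2 * (1/(q α (M N + 1) : ℝ)) :=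
    mul_le_mul_of_nonneg_right (by norm_num) hx.le
  linarith

end CF

open CF

section Helpers

open CF

/-- zsmul on the circle comes from multiplication on `ℝ`. -/
lemma circle_zsmul (m : ℤ) (r : ℝ) :
    (m • (r : Circle1)) = (((m : ℝ) * r : ℝ) : Circle1) := by
  rw [← QuotientAddGroup.mk_zsmul, zsmul_eq_mul]

lemma circle_norm_le (r : ℝ) : ‖(r : Circle1)‖ ≤ |r| := by
  simpa [Real.norm_eq_abs] using
    QuotientAddGroup.norm_mk_le_norm (S := AddSubgroup.zmultiples (1:ℝ)) (m := r)

lemma circle_int (z : ℤ) : (((z : ℝ)) : Circle1) = 0 := by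
  rw [AddCircle.coe_eq_zero_iff]
  exact ⟨z, by simp⟩

lemma circle_sub (r s : ℝ) : ((r - s : ℝ) : Circle1) = (r : Circle1) - (s : Circle1) := by
  rfl

lemma circle_norm_sub_int (r : ℝ) (z : ℤ) : ‖(r : Circle1)‖ ≤ |r - z| := by
  have h1 : (r : Circle1) = ((r - (z:ℝ) : ℝ) : Circle1) := by
    rw [circle_sub, circle_int, sub_zero]
  rw [h1]
  exact circle_norm_le _

end Helpers


open CF in
lemma good_bound {α : ℝ} (hα : α ∈ Set.Ioo (0:ℝ) 1) (hirr : Irrational α)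
    (S : Set ℕ) (t n : ℕ)
    (hn1 : M 0 + 2*t + 3 ≤ n)
    (hgood : ∀ k, M k + 2*t + 3 ≤ n ∨ n + 2*t + 2 ≤ M k) :
    ‖((q α n : ℤ) • ((Xr α S : ℝ) : Circle1))‖ ≤ 2 * (1/2:ℝ)^t := by
  classical
  have hM0 : M 0 = 9 := by norm_num [M]
  have h3 : 3 ≤ Nat.sqrt (n-1) := Nat.le_sqrt.2 (by omega)
  set j := Nat.sqrt (n-1) - 3 with hjdef
  have hj3 : j + 3 = Nat.sqrt (n-1) := by omega
  have hMj_eq : M j = Nat.sqrt (n-1) ^ 2 := by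
    rw [show M j = (j+3)^2 from rfl, hj3]
  have hMjn : M j < n := by
    have h := Nat.sqrt_le' (n-1)
    rw [hMj_eq]
    generalize Nat.sqrt (n-1)^2 = u at h ⊢
    omega
  have hMj1_eq : M (j+1) = (Nat.sqrt (n-1) + 1) ^ 2 := by
    rw [show M (j+1) = (j+1+3)^2 from rfl, show j+1+3 = Nat.sqrt (n-1)+1 by omega]
  have hnMj1 : n ≤ M (j+1) := by
    have h := Nat.lt_succ_sqrt' (n-1)
    rw [hMj1_eq]
    generalize h2 : (Nat.sqrt (n-1)+1)^2 = u at h ⊢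
    omega
  have hgj : M j + 2*t + 3 ≤ n := (hgood j).resolve_right (by omega)
  have hgj1 : n + 2*t + 2 ≤ M (j+1) := (hgood (j+1)).resolve_left (by omega)
  set N := j + 1 with hN
  set f : ℕ → ℝ := fun k => S.indicator (fun i => θ α (M i)) k with hfdef
  have hsum : Summable f := summable_ind hα hirr S
  have hsplit : ∑ k ∈ Finset.range N, f k + ∑' k, f (k + N) = Xr α S :=
    Summable.sum_add_tsum_nat_add N hsum
  set T2 : ℝ := ∑' k, f (k + N) with hT2
  set W : ℤ := ∑ k ∈ Finset.range N,
      if k ∈ S then ((q α (M k) : ℤ) * p α n - (q α n : ℤ) * p α (M k)) else 0 with hW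
  have hWr : (W : ℝ) = ∑ k ∈ Finset.range N,
      (if k ∈ S then ((q α (M k) : ℝ) * p α n - (q α n : ℝ) * p α (M k)) else 0) := by
    rw [hW]
    push_cast [apply_ite (fun z : ℤ => (z : ℝ))]
    norm_num
  have hterm : ∀ k, (q α n : ℝ) * f k -
      (if k ∈ S then ((q α (M k) : ℝ) * p α n - (q α n : ℝ) * p α (M k)) else 0)
      = (if k ∈ S then (q α (M k) : ℝ) * θ α n else 0) := by
    intro k
    by_cases hk : k ∈ S
    · simp only [hfdef, Set.indicator_of_mem hk, if_pos hk, θ]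
      ring
    · simp [hfdef, Set.indicator_of_notMem hk, if_neg hk]
  have hdiff : (q α n : ℝ) * Xr α S - (W : ℝ)
      = (∑ k ∈ Finset.range N, if k ∈ S then (q α (M k) : ℝ) * θ α n else 0)
        + (q α n : ℝ) * T2 := by
    have e1 : (q α n : ℝ) * Xr α S - (W:ℝ)
        = ((q α n : ℝ) * ∑ k ∈ Finset.range N, f k - (W:ℝ)) + (q α n:ℝ) * T2 := by
      rw [← hsplit]; ring
    rw [e1, hWr, Finset.mul_sum, ← Finset.sum_sub_distrib]
    congr 1
    exact Finset.sum_congr rfl (fun k _ => hterm k)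
  -- bound the finite part
  have hDn_pos := D_pos hα hirr n
  have habs1 : |∑ k ∈ Finset.range N, if k ∈ S then (q α (M k) : ℝ) * θ α n else 0|
      ≤ (∑ k ∈ Finset.range N, (q α (M k) : ℝ)) * D α n := by
    calc |∑ k ∈ Finset.range N, if k ∈ S then (q α (M k) : ℝ) * θ α n else 0|
        ≤ ∑ k ∈ Finset.range N, |if k ∈ S then (q α (M k) : ℝ) * θ α n else 0| :=
          Finset.abs_sum_le_sum_abs _ _
      _ ≤ ∑ k ∈ Finset.range N, (q α (M k) : ℝ) * D α n := by
          apply Finset.sum_le_sum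
          intro k _
          by_cases hk : k ∈ S
          · rw [if_pos hk, abs_mul, abs_theta hα hirr, Nat.abs_cast]
          · rw [if_neg hk, abs_zero]
            have := q_pos_r hα hirr (M k)
            positivity
      _ = (∑ k ∈ Finset.range N, (q α (M k) : ℝ)) * D α n := by rw [← Finset.sum_mul]
  have hsumq : (∑ k ∈ Finset.range N, (q α (M k) : ℝ)) ≤ 2 * (q α (M j) : ℝ) := by
    have := sum_qM hα hirr j
    rw [hN]
    exact_mod_cast this
  have hq1 : (2:ℝ)^(t+2) * (q α (M j) : ℝ) ≤ (q α (n+1) : ℝ) := by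
    have h1 : 2^((n+1 - M j)/2) * q α (M j) ≤ q α (n+1) := q_growth' hα hirr (by omega)
    have h2 : t+2 ≤ (n+1 - M j)/2 := by omega
    exact_mod_cast le_trans
      (Nat.mul_le_mul_right _ (Nat.pow_le_pow_right (by norm_num) h2)) h1
  have hqn1 : (0:ℝ) < (q α (n+1) : ℝ) := q_pos_r hα hirr _
  have hqMj : (0:ℝ) < (q α (M j) : ℝ) := q_pos_r hα hirr _
  have hsumq_nonneg : (0:ℝ) ≤ ∑ k ∈ Finset.range N, (q α (M k) : ℝ) :=
    Finset.sum_nonneg (fun k _ => Nat.cast_nonneg _)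
  have hterm1 : (∑ k ∈ Finset.range N, (q α (M k) : ℝ)) * D α n ≤ (1/2:ℝ)^(t+1) := by
    have hD := D_le hα hirr n
    calc (∑ k ∈ Finset.range N, (q α (M k) : ℝ)) * D α n
        ≤ (2 * (q α (M j) : ℝ)) * (1/(q α (n+1) : ℝ)) :=
          mul_le_mul hsumq hD hDn_pos.le (by positivity)
      _ ≤ (2 * (q α (M j) : ℝ)) * (1/((2:ℝ)^(t+2) * (q α (M j) : ℝ))) := by
          apply mul_le_mul_of_nonneg_left _ (by positivity)
          exact one_div_le_one_div_of_le (by positivity) hq1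
      _ = (1/2:ℝ)^(t+1) := by
          rw [div_pow, one_pow]
          field_simp
          ring
  -- bound the tail part
  have htail : |T2| ≤ 2 * (1/(q α (M N + 1):ℝ)) := tail_bound2 hα hirr S N
  have hq2 : (2:ℝ)^(t+1) * (q α n : ℝ) ≤ (q α (M N + 1) : ℝ) := by
    have h1 : 2^((M N + 1 - n)/2) * q α n ≤ q α (M N + 1) := q_growth' hα hirr (by omega)
    have h2 : t+1 ≤ (M N + 1 - n)/2 := by omega
    exact_mod_cast le_trans
      (Nat.mul_le_mul_right _ (Nat.pow_le_pow_right (by norm_num) h2)) h1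
  have hqn : (0:ℝ) < (q α n : ℝ) := q_pos_r hα hirr _
  have hqMN : (0:ℝ) < (q α (M N + 1) : ℝ) := q_pos_r hα hirr _
  have hterm2 : (q α n : ℝ) * |T2| ≤ (1/2:ℝ)^t := by
    calc (q α n : ℝ) * |T2| ≤ (q α n : ℝ) * (2 * (1/(q α (M N + 1):ℝ))) :=
          mul_le_mul_of_nonneg_left htail hqn.le
      _ ≤ (q α n : ℝ) * (2 * (1/((2:ℝ)^(t+1) * (q α n : ℝ)))) := by
          apply mul_le_mul_of_nonneg_left _ hqn.le
          apply mul_le_mul_of_nonneg_left _ (by norm_num)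
          exact one_div_le_one_div_of_le (by positivity) hq2
      _ = (1/2:ℝ)^t := by
          rw [div_pow, one_pow]
          field_simp
          ring
  -- put everything together
  have hzs : ((q α n : ℤ) • ((Xr α S : ℝ) : Circle1))
      = (((q α n : ℝ) * Xr α S : ℝ) : Circle1) := by
    rw [circle_zsmul]
    norm_num
  rw [hzs]
  have hb := circle_norm_sub_int ((q α n : ℝ) * Xr α S) W
  have hchain : |(q α n : ℝ) * Xr α S - (W:ℝ)| ≤ (1/2:ℝ)^(t+1) + (1/2:ℝ)^t := by
    rw [hdiff]
    calc |(∑ k ∈ Finset.range N, if k ∈ S then (q α (M k) : ℝ) * θ α n else 0)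
          + (q α n : ℝ) * T2|
        ≤ |∑ k ∈ Finset.range N, if k ∈ S then (q α (M k) : ℝ) * θ α n else 0|
          + |(q α n : ℝ) * T2| := abs_add_le _ _
      _ ≤ (1/2:ℝ)^(t+1) + (1/2:ℝ)^t := by
          have h1 := le_trans habs1 hterm1
          have h2 : |(q α n : ℝ) * T2| = (q α n : ℝ) * |T2| := by
            rw [abs_mul, abs_of_nonneg hqn.le]
          rw [h2]
          exact add_le_add h1 hterm2
  have hps : (1/2:ℝ)^(t+1) = (1/2) * (1/2:ℝ)^t := by rw [pow_succ]; ring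
  have hpos : (0:ℝ) < (1/2:ℝ)^t := by positivity
  calc ‖(((q α n : ℝ) * Xr α S : ℝ) : Circle1)‖ ≤ |(q α n : ℝ) * Xr α S - (W:ℝ)| := hb
    _ ≤ (1/2:ℝ)^(t+1) + (1/2:ℝ)^t := hchain
    _ ≤ 2 * (1/2:ℝ)^t := by rw [hps]; linarith


section Density

lemma densityZero_mono {A B : Set ℕ} (hAB : A ⊆ B) (hB : DensityZero B) : DensityZero A := by
  apply squeeze_zero (fun n => by positivity) (fun n => ?_) hB
  have hfin : (B ∩ Set.Icc 1 n).Finite := Set.Finite.inter_of_right (Set.finite_Icc 1 n) B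
  have h1 : ((A ∩ Set.Icc 1 n).ncard : ℝ) ≤ ((B ∩ Set.Icc 1 n).ncard : ℝ) := by
    exact_mod_cast Set.ncard_le_ncard (Set.inter_subset_inter_left _ hAB) hfin
  simp only [div_eq_mul_inv]
  exact mul_le_mul_of_nonneg_right h1 (by positivity)

lemma sqrt_tendsto_atTop : Tendsto (fun n : ℕ => Nat.sqrt n) atTop atTop := by
  apply tendsto_atTop_atTop.2
  intro b
  exact ⟨b*b, fun a ha => Nat.le_sqrt.2 ha⟩

lemma density_aux (A : Set ℕ) (C K : ℕ)
    (h : ∀ n, (A ∩ Set.Icc 1 n).ncard ≤ C * Nat.sqrt n + K) : DensityZero A := by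
  have h1 : Tendsto (fun n : ℕ => ((Nat.sqrt n : ℝ))) atTop atTop :=
    tendsto_natCast_atTop_atTop.comp sqrt_tendsto_atTop
  have h2 : Tendsto (fun n : ℕ => (C:ℝ) * ((Nat.sqrt n : ℝ))⁻¹) atTop (𝓝 0) := by
    simpa using (h1.inv_tendsto_atTop).const_mul (C:ℝ)
  have h3 := tendsto_const_div_atTop_nhds_zero_nat (K:ℝ)
  have hg : Tendsto (fun n : ℕ => (C:ℝ)/(Nat.sqrt n : ℝ) + (K:ℝ)/n) atTop (𝓝 0) := by
    have := h2.add h3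
    simpa [div_eq_mul_inv] using this
  apply squeeze_zero' (Filter.Eventually.of_forall fun n => by positivity) ?_ hg
  filter_upwards [eventually_ge_atTop 1] with n hn
  have hs1 : 1 ≤ Nat.sqrt n := Nat.le_sqrt.2 (by omega)
  have hsq : (Nat.sqrt n : ℝ) * (Nat.sqrt n : ℝ) ≤ (n:ℝ) := by exact_mod_cast Nat.sqrt_le n
  have hn0 : (0:ℝ) < n := by exact_mod_cast hn
  have hs0 : (0:ℝ) < (Nat.sqrt n : ℝ) := by exact_mod_cast hs1
  have hb : ((A ∩ Set.Icc 1 n).ncard : ℝ) ≤ (C:ℝ) * (Nat.sqrt n:ℝ) + K := by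
    exact_mod_cast h n
  calc ((A ∩ Set.Icc 1 n).ncard : ℝ)/n ≤ ((C:ℝ) * (Nat.sqrt n:ℝ) + K)/n := by
        simp only [div_eq_mul_inv]
        exact mul_le_mul_of_nonneg_right hb (by positivity)
    _ = (C:ℝ)*(Nat.sqrt n:ℝ)/n + (K:ℝ)/n := by ring
    _ ≤ (C:ℝ)/(Nat.sqrt n:ℝ) + (K:ℝ)/n := by
        have hfst : (C:ℝ)*(Nat.sqrt n:ℝ)/n ≤ (C:ℝ)/(Nat.sqrt n:ℝ) := by
          rw [div_le_div_iff₀ hn0 hs0]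
          nlinarith [hsq, Nat.cast_nonneg (α := ℝ) C]
        linarith

open CF

/-- The "bad" set of indices for parameter `t`. -/
def BadSet (t : ℕ) : Set ℕ :=
  {n | ¬ (M 0 + 2*t + 3 ≤ n ∧ ∀ k, M k + 2*t + 3 ≤ n ∨ n + 2*t + 2 ≤ M k)}

lemma sqrt_add_le (N m : ℕ) : Nat.sqrt (N + m) ≤ Nat.sqrt N + m := by
  have h : N < (Nat.sqrt N + 1)^2 := by
    simpa [Nat.succ_eq_add_one] using Nat.lt_succ_sqrt' N
  have e : (Nat.sqrt N + m + 1)^2 = (Nat.sqrt N + 1)^2 + m*(2*Nat.sqrt N + m + 2) := by ring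
  have hv : m ≤ m*(2*Nat.sqrt N + m + 2) := Nat.le_mul_of_pos_right m (by omega)
  have h2 : N + m < (Nat.sqrt N + m + 1)^2 := by
    rw [e]
    omega
  have h3 : Nat.sqrt (N + m) < Nat.sqrt N + m + 1 := Nat.sqrt_lt'.2 h2
  omega

lemma bad_subset (t N : ℕ) :
    BadSet t ∩ Set.Icc 1 N ⊆
      ↑(Finset.Icc 1 (M 0 + 2*t + 2) ∪
        (Finset.range (Nat.sqrt (N + (2*t + 1)) + 1)).biUnion
          (fun k => Finset.Icc (M k - (2*t+2)) (M k + (2*t+2)))) := by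
  rintro n ⟨hbad, hn1, hnN⟩
  simp only [BadSet, Set.mem_setOf_eq, not_and_or, not_forall, not_or, not_le] at hbad
  rw [Finset.mem_coe, Finset.mem_union]
  rcases hbad with h | ⟨k, hk1, hk2⟩
  · left
    rw [Finset.mem_Icc]
    omega
  · right
    rw [Finset.mem_biUnion]
    refine ⟨k, ?_, ?_⟩
    · rw [Finset.mem_range]
      have hMk : M k ≤ N + (2*t + 1) := by omega
      have hk3 : k + 3 ≤ Nat.sqrt (N + (2*t+1)) :=
        Nat.le_sqrt'.2 (le_trans (le_of_eq rfl) hMk)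
      omega
    · rw [Finset.mem_Icc]
      omega

lemma bad_count (t N : ℕ) :
    (BadSet t ∩ Set.Icc 1 N).ncard
      ≤ (4*t+5) * Nat.sqrt N + ((M 0 + 2*t + 2) + (2*t+2)*(4*t+5)) := by
  have hsub := bad_subset t N
  have hcard := Set.ncard_le_ncard hsub (Finset.finite_toSet _)
  rw [Set.ncard_coe_finset] at hcard
  refine le_trans hcard ?_
  have h1 : (Finset.Icc 1 (M 0 + 2*t + 2) ∪
        (Finset.range (Nat.sqrt (N + (2*t + 1)) + 1)).biUnion
          (fun k => Finset.Icc (M k - (2*t+2)) (M k + (2*t+2)))).card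
      ≤ (M 0 + 2*t + 2) + (Nat.sqrt (N + (2*t+1)) + 1) * (4*t+5) := by
    refine le_trans (Finset.card_union_le _ _) ?_
    have hA : (Finset.Icc 1 (M 0 + 2*t + 2)).card = M 0 + 2*t + 2 := by
      rw [Nat.card_Icc]
      omega
    have hB : ((Finset.range (Nat.sqrt (N + (2*t + 1)) + 1)).biUnion
          (fun k => Finset.Icc (M k - (2*t+2)) (M k + (2*t+2)))).card
        ≤ (Nat.sqrt (N + (2*t+1)) + 1) * (4*t+5) := by
      refine le_trans (Finset.card_biUnion_le) ?_
      have : ∀ k ∈ Finset.range (Nat.sqrt (N + (2*t + 1)) + 1),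
          (Finset.Icc (M k - (2*t+2)) (M k + (2*t+2))).card ≤ 4*t+5 := by
        intro k _
        rw [Nat.card_Icc]
        omega
      calc ∑ k ∈ Finset.range (Nat.sqrt (N + (2*t + 1)) + 1),
            (Finset.Icc (M k - (2*t+2)) (M k + (2*t+2))).card
          ≤ ∑ _k ∈ Finset.range (Nat.sqrt (N + (2*t + 1)) + 1), (4*t+5) :=
            Finset.sum_le_sum this
        _ = (Nat.sqrt (N + (2*t+1)) + 1) * (4*t+5) := by
            rw [Finset.sum_const, Finset.card_range, smul_eq_mul]
    omega
  refine le_trans h1 ?_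
  have h2 : Nat.sqrt (N + (2*t+1)) ≤ Nat.sqrt N + (2*t+1) := sqrt_add_le N (2*t+1)
  have h3 : (Nat.sqrt (N + (2*t+1)) + 1) * (4*t+5)
      ≤ (Nat.sqrt N + (2*t+2)) * (4*t+5) := Nat.mul_le_mul_right _ (by omega)
  have h4 : (Nat.sqrt N + (2*t+2)) * (4*t+5)
      = (4*t+5) * Nat.sqrt N + (2*t+2)*(4*t+5) := by ring
  omega

lemma bad_density (t : ℕ) : DensityZero (BadSet t) :=
  density_aux _ (4*t+5) ((M 0 + 2*t + 2) + (2*t+2)*(4*t+5)) (bad_count t)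

end Density


section Main

open CF

lemma mem_stat {α : ℝ} (hα : α ∈ Set.Ioo (0:ℝ) 1) (hirr : Irrational α) (S : Set ℕ) :
    ((Xr α S : ℝ) : Circle1) ∈ statCharSet (fun n => (q α n : ℤ)) := by
  intro ε hε
  obtain ⟨t, ht⟩ := exists_pow_lt_of_lt_one (half_pos hε) (by norm_num : (1/2:ℝ) < 1)
  apply densityZero_mono ?_ (bad_density t)
  intro n hn
  simp only [Set.mem_setOf_eq] at hn
  by_contra hgoodn
  simp only [BadSet, Set.mem_setOf_eq, not_not] at hgoodn
  obtain ⟨h1, h2⟩ := hgoodn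
  have hb := good_bound hα hirr S t n h1 h2
  have hh : ε ≤ 2*(1/2:ℝ)^t := le_trans hn hb
  linarith

lemma Xr_abs_le {α : ℝ} (hα : α ∈ Set.Ioo (0:ℝ) 1) (hirr : Irrational α) (S : Set ℕ) :
    |Xr α S| ≤ (1/8 : ℝ) := by
  have h := tail_bound2 hα hirr S 0
  simp only [Nat.add_zero] at h
  have hq : (16:ℝ) ≤ (q α (M 0 + 1):ℝ) := by exact_mod_cast qM_lower hα hirr 0
  have hqpos : (0:ℝ) < (q α (M 0 + 1):ℝ) := q_pos_r hα hirr _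
  have h2 : (1/(q α (M 0 + 1):ℝ)) ≤ 1/16 := one_div_le_one_div_of_le (by norm_num) hq
  calc |Xr α S| ≤ 2 * (1/(q α (M 0 + 1):ℝ)) := h
    _ ≤ 2 * (1/16) := by linarith
    _ = 1/8 := by norm_num

lemma Xr_ne {α : ℝ} (hα : α ∈ Set.Ioo (0:ℝ) 1) (hirr : Irrational α) {S T : Set ℕ}
    (j : ℕ) (hjS : j ∈ S) (hjT : j ∉ T)
    (hagree : ∀ k, k < j → (k ∈ S ↔ k ∈ T)) : Xr α S ≠ Xr α T := by
  classical
  set fS : ℕ → ℝ := fun k => S.indicator (fun i => θ α (M i)) k with hfS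
  set fT : ℕ → ℝ := fun k => T.indicator (fun i => θ α (M i)) k with hfT
  have hsS : Summable fS := summable_ind hα hirr S
  have hsT : Summable fT := summable_ind hα hirr T
  have hS : ∑ k ∈ Finset.range (j+1), fS k + ∑' k, fS (k + (j+1)) = Xr α S :=
    Summable.sum_add_tsum_nat_add (j+1) hsS
  have hT : ∑ k ∈ Finset.range (j+1), fT k + ∑' k, fT (k + (j+1)) = Xr α T :=
    Summable.sum_add_tsum_nat_add (j+1) hsT
  set tS : ℝ := ∑' k, fS (k + (j+1)) with htSdef
  set tT : ℝ := ∑' k, fT (k + (j+1)) with htTdef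
  have hhead : ∑ k ∈ Finset.range (j+1), fS k
      = ∑ k ∈ Finset.range (j+1), fT k + θ α (M j) := by
    rw [Finset.sum_range_succ, Finset.sum_range_succ]
    have hcong : ∑ k ∈ Finset.range j, fS k = ∑ k ∈ Finset.range j, fT k := by
      apply Finset.sum_congr rfl
      intro k hk
      rw [Finset.mem_range] at hk
      have hiff := hagree k hk
      by_cases h : k ∈ S
      · simp [hfS, hfT, Set.indicator_of_mem h, Set.indicator_of_mem (hiff.1 h)]
      · simp [hfS, hfT, Set.indicator_of_notMem h,
          Set.indicator_of_notMem (fun hh => h (hiff.2 hh))]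
    rw [hcong]
    simp [hfS, hfT, Set.indicator_of_mem hjS, Set.indicator_of_notMem hjT]
  have hXdiff : Xr α S - Xr α T = θ α (M j) + (tS - tT) := by
    rw [← hS, ← hT, hhead]
    ring
  have hD := D_ge2 hα hirr (M j)
  have habs : |θ α (M j)| = D α (M j) := abs_theta hα hirr _
  have htS : |tS| ≤ (8/7) * (1/(q α (M (j+1) + 1):ℝ)) := tail_bound hα hirr S (j+1)
  have htT : |tT| ≤ (8/7) * (1/(q α (M (j+1) + 1):ℝ)) := tail_bound hα hirr T (j+1)
  have hrat : (8:ℝ) * (q α (M j + 1):ℝ) ≤ (q α (M (j+1) + 1):ℝ) := by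
    exact_mod_cast qM_ratio hα hirr j
  have hq1 : (0:ℝ) < (q α (M j + 1):ℝ) := q_pos_r hα hirr _
  have hq2 : (0:ℝ) < (q α (M (j+1) + 1):ℝ) := q_pos_r hα hirr _
  intro heq
  have h0 : θ α (M j) = tT - tS := by
    have : (0:ℝ) = θ α (M j) + (tS - tT) := by rw [← hXdiff, heq, sub_self]
    linarith
  have hDle : D α (M j) ≤ |tT| + |tS| := by
    rw [← habs, h0]
    exact abs_sub _ _
  have hbound : (8/7) * (1/(q α (M (j+1) + 1):ℝ)) ≤ (8/7) * (1/(8 * (q α (M j + 1):ℝ))) := by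
    apply mul_le_mul_of_nonneg_left _ (by norm_num)
    exact one_div_le_one_div_of_le (by positivity) hrat
  have hnum : (8/7:ℝ) * (1/(8 * (q α (M j + 1):ℝ))) = 1/(7 * (q α (M j + 1):ℝ)) := by
    field_simp
  have hlow : 1 / (2 * (q α (M j + 1):ℝ)) ≤ D α (M j) := hD
  have hcmp : (2:ℝ)/(7 * (q α (M j + 1):ℝ)) < 1/(2 * (q α (M j + 1):ℝ)) := by
    rw [div_lt_div_iff₀ (by positivity) (by positivity)]
    nlinarith
  have : D α (M j) ≤ 2/(7 * (q α (M j + 1):ℝ)) := by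
    calc D α (M j) ≤ |tT| + |tS| := hDle
      _ ≤ (8/7) * (1/(q α (M (j+1) + 1):ℝ)) + (8/7) * (1/(q α (M (j+1) + 1):ℝ)) :=
          add_le_add htT htS
      _ ≤ 1/(7 * (q α (M j + 1):ℝ)) + 1/(7 * (q α (M j + 1):ℝ)) := by
          rw [← hnum]
          exact add_le_add hbound hbound
      _ = 2/(7 * (q α (M j + 1):ℝ)) := by ring
  linarith

lemma Xr_inj {α : ℝ} (hα : α ∈ Set.Ioo (0:ℝ) 1) (hirr : Irrational α) :
    Function.Injective (fun S : Set ℕ => ((Xr α S : ℝ) : Circle1)) := by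
  intro S T h
  by_contra hne
  have hex : ∃ k, ¬(k ∈ S ↔ k ∈ T) := by
    by_contra hall
    push_neg at hall
    exact hne (Set.ext fun k => (hall k))
  classical
  have hreal : Xr α S = Xr α T := by
    have hcirc : ((Xr α S - Xr α T : ℝ) : Circle1) = 0 := by
      rw [circle_sub]
      simp only at h
      rw [h, sub_self]
    obtain ⟨z, hz⟩ := (AddCircle.coe_eq_zero_iff _).1 hcirc
    have hz' : (z:ℝ) = Xr α S - Xr α T := by
      rw [← hz]
      simp [zsmul_eq_mul]
    have hb1 := Xr_abs_le hα hirr S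
    have hb2 := Xr_abs_le hα hirr T
    have hzabs : |(z:ℝ)| < 1 := by
      rw [hz']
      calc |Xr α S - Xr α T| ≤ |Xr α S| + |Xr α T| := abs_sub _ _
        _ ≤ 1/8 + 1/8 := add_le_add hb1 hb2
        _ < 1 := by norm_num
    have hz0 : z = 0 := by
      have h1 : |z| < 1 := by exact_mod_cast hzabs
      exact Int.abs_lt_one_iff.1 h1
    have : (0:ℝ) = Xr α S - Xr α T := by rw [← hz']; simp [hz0]
    linarith
  set j := Nat.find hex with hjdef
  have hj := Nat.find_spec hex
  have hagree : ∀ k, k < j → (k ∈ S ↔ k ∈ T) := by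
    intro k hk
    have := Nat.find_min hex hk
    tauto
  by_cases hjS : j ∈ S
  · have hjT : j ∉ T := by tauto
    exact Xr_ne hα hirr j hjS hjT hagree hreal
  · have hjT : j ∈ T := by tauto
    exact Xr_ne hα hirr j hjT hjS (fun k hk => (hagree k hk).symm) hreal.symm

end Main



/-- **Theorem B.** For irrational `α ∈ (0,1)` with convergent denominators `(qₙ)`,
the statistically characterized subgroup `t^s_(qₙ)(𝕋)` is uncountable. -/
theorem stmt_0 (α : ℝ) (hα : α ∈ Set.Ioo (0 : ℝ) 1) (hirr : Irrational α) :
    ¬ (statCharSet (fun n => (q α n : ℤ))).Countable := by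
  intro hc
  have hsub : Set.range (fun S : Set ℕ => ((Xr α S : ℝ) : Circle1))
      ⊆ statCharSet (fun n => (q α n : ℤ)) := by
    rintro _ ⟨S, rfl⟩
    exact mem_stat hα hirr S
  have h2 : (Set.range (fun S : Set ℕ => ((Xr α S : ℝ) : Circle1))).Countable :=
    hc.mono hsub
  have h4 := h2.preimage (Xr_inj hα hirr)
  rw [Set.preimage_range] at h4
  rw [Set.countable_univ_iff] at h4
  obtain ⟨f, hf⟩ := @Countable.exists_injective_nat (Set ℕ) h4
  exact Function.cantor_injective f hf
end
end

section
/- Let α = [0; a₁, a₂, …] ∈ (0,1) be irrational with (aₙ) unbounded, and let (qₙ) be the sequence of denominators of the convergents of α. Then t^s_{(qₙ)}(𝕋) strictly contains t_{(qₙ)}(𝕋), i.e., there exists β ∈ 𝕋 with qₙβ → 0 statistically in 𝕋 but qₙβ ↛ 0 in 𝕋. -/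
open Filter Topology

noncomputable section

open CF

namespace SC

def T (α : ℝ) (n : ℕ) : ℝ := ∏ i ∈ Finset.range (n+1), G α i

lemma G_mem {α : ℝ} (hα : α ∈ Set.Ioo (0 : ℝ) 1) (hirr : Irrational α) (n : ℕ) :
    G α n ∈ Set.Ioo (0 : ℝ) 1 ∧ Irrational (G α n) := by
  induction n with
  | zero => exact ⟨hα, hirr⟩
  | succ n ih =>
    obtain ⟨⟨h0, h1⟩, hir⟩ := ih
    have hinv : Irrational (G α n)⁻¹ := hir.inv
    have h2 : Irrational (Int.fract (G α n)⁻¹) := by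
      unfold Int.fract
      exact hinv.sub_intCast _
    refine ⟨⟨?_, ?_⟩, h2⟩
    · rcases lt_or_eq_of_le (Int.fract_nonneg (G α n)⁻¹) with h | h
      · simpa [G] using h
      · exact absurd (by simpa using h.symm) (by simpa [G] using h2.ne_rat 0)
    · simpa [G] using Int.fract_lt_one (G α n)⁻¹

lemma one_lt_inv_G {α : ℝ} (hα : α ∈ Set.Ioo (0 : ℝ) 1) (hirr : Irrational α) (n : ℕ) :
    1 < (G α n)⁻¹ := by
  obtain ⟨⟨h0, h1⟩, _⟩ := G_mem hα hirr n
  exact (one_lt_inv₀ h0).mpr h1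

lemma one_le_a {α : ℝ} (hα : α ∈ Set.Ioo (0 : ℝ) 1) (hirr : Irrational α) (n : ℕ) :
    1 ≤ a α (n+1) := by
  have := one_lt_inv_G hα hirr n
  have : (1:ℝ) ≤ (G α n)⁻¹ := this.le
  have h2 : ((1:ℕ):ℝ) ≤ (G α n)⁻¹ := by push_cast; exact this
  simpa [a] using Nat.le_floor h2

lemma inv_G_eq {α : ℝ} (hα : α ∈ Set.Ioo (0 : ℝ) 1) (hirr : Irrational α) (n : ℕ) :
    (G α n)⁻¹ = (a α (n+1) : ℝ) + G α (n+1) := by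
  have h1 : 1 < (G α n)⁻¹ := one_lt_inv_G hα hirr n
  have h0 : (0:ℝ) ≤ (G α n)⁻¹ := by linarith
  have ha : (a α (n+1) : ℝ) = (⌊(G α n)⁻¹⌋ : ℝ) := by
    simp only [a]
    exact natCast_floor_eq_intCast_floor h0
  have hG : G α (n+1) = Int.fract (G α n)⁻¹ := rfl
  rw [ha, hG, Int.fract]
  ring


lemma T_zero (α : ℝ) : T α 0 = G α 0 := by simp [T]

lemma T_succ (α : ℝ) (n : ℕ) : T α (n+1) = T α n * G α (n+1) := by
  simp [T, Finset.prod_range_succ]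

lemma T_pos {α : ℝ} (hα : α ∈ Set.Ioo (0 : ℝ) 1) (hirr : Irrational α) (n : ℕ) :
    0 < T α n := by
  apply Finset.prod_pos
  intro i _
  exact (G_mem hα hirr i).1.1

lemma T_succ_lt {α : ℝ} (hα : α ∈ Set.Ioo (0 : ℝ) 1) (hirr : Irrational α) (n : ℕ) :
    T α (n+1) < T α n := by
  rw [T_succ]
  nth_rewrite 2 [← mul_one (T α n)]
  exact mul_lt_mul_of_pos_left (G_mem hα hirr (n+1)).1.2 (T_pos hα hirr n)

lemma T_anti {α : ℝ} (hα : α ∈ Set.Ioo (0 : ℝ) 1) (hirr : Irrational α) :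
    StrictAnti (T α) := strictAnti_nat_of_succ_lt (T_succ_lt hα hirr)

lemma T_lt_one {α : ℝ} (hα : α ∈ Set.Ioo (0 : ℝ) 1) (hirr : Irrational α) (n : ℕ) :
    T α n < 1 := by
  have h0 : T α n ≤ T α 0 := (T_anti hα hirr).antitone (Nat.zero_le n)
  have : T α 0 = α := by simp [T_zero]; rfl
  rw [this] at h0
  exact h0.trans_lt hα.2

lemma q_rec (α : ℝ) (n : ℕ) : q α (n+2) = a α (n+2) * q α (n+1) + q α n := rfl

lemma p_rec (α : ℝ) (n : ℕ) : p α (n+2) = a α (n+2) * p α (n+1) + p α n := rfl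

lemma q_one (α : ℝ) : q α 1 = a α 1 := rfl

lemma theta_eq {α : ℝ} (hα : α ∈ Set.Ioo (0 : ℝ) 1) (hirr : Irrational α) (n : ℕ) :
    θ α n = (-1)^n * T α n := by
  induction n using Nat.strong_induction_on with
  | _ n ih =>
    match n with
    | 0 =>
      have : T α 0 = α := by simp [T_zero]; rfl
      simp [θ, CF.q, CF.p, this]
    | 1 =>
      have h := inv_G_eq hα hirr 0
      have hG0 : G α 0 = α := rfl
      have hα0 : α ≠ 0 := ne_of_gt hα.1
      have hmul : α * (G α 0)⁻¹ = 1 := by rw [hG0]; field_simp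
      have h2 : (a α 1 : ℝ) * α + G α 1 * α = 1 := by
        rw [h] at hmul; ring_nf; ring_nf at hmul; linarith
      have hT1 : T α 1 = α * G α 1 := by rw [T_succ, T_zero, hG0]
      have hθ : θ α 1 = (a α 1 : ℝ) * α - 1 := by
        simp [θ, q_one, CF.p]
      rw [hθ, hT1]
      ring_nf
      ring_nf at h2
      linarith
    | (n+2) =>
      have h1 := ih (n+1) (by omega)
      have h0 := ih n (by omega)
      have hrec : θ α (n+2) = (a α (n+2) : ℝ) * θ α (n+1) + θ α n := by
        simp only [θ, q_rec, p_rec]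
        push_cast
        ring
      have hia := inv_G_eq hα hirr (n+1)
      have haval : (a α (n+2) : ℝ) = (G α (n+1))⁻¹ - G α (n+2) := by linarith
      have hGne : G α (n+1) ≠ 0 := ne_of_gt (G_mem hα hirr (n+1)).1.1
      have hTn1 : T α (n+1) = T α n * G α (n+1) := T_succ α n
      have hTn2 : T α (n+2) = T α n * G α (n+1) * G α (n+2) := by
        rw [T_succ, T_succ]
      rw [hrec, h1, h0, haval, hTn1, hTn2]
      field_simp
      ring

lemma one_le_q {α : ℝ} (hα : α ∈ Set.Ioo (0 : ℝ) 1) (hirr : Irrational α) (n : ℕ) :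
    1 ≤ q α n := by
  induction n using Nat.strong_induction_on with
  | _ n ih =>
    match n with
    | 0 => simp [CF.q]
    | 1 => simpa [q_one] using one_le_a hα hirr 0
    | (n+2) =>
      have h1 := ih (n+1) (by omega)
      have ha := one_le_a hα hirr (n+1)
      rw [q_rec]
      nlinarith

lemma q_le_q_succ {α : ℝ} (hα : α ∈ Set.Ioo (0 : ℝ) 1) (hirr : Irrational α) (n : ℕ) :
    q α n ≤ q α (n+1) := by
  match n with
  | 0 => simpa [CF.q, q_one] using one_le_a hα hirr 0
  | (n+1) =>
    have h1 := one_le_q hα hirr (n+1)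
    have h0 := one_le_q hα hirr n
    have ha := one_le_a hα hirr (n+1)
    rw [q_rec]
    nlinarith

lemma q_mono {α : ℝ} (hα : α ∈ Set.Ioo (0 : ℝ) 1) (hirr : Irrational α) :
    Monotone (q α) := monotone_nat_of_le_succ (q_le_q_succ hα hirr)

lemma two_q_le {α : ℝ} (hα : α ∈ Set.Ioo (0 : ℝ) 1) (hirr : Irrational α) (n : ℕ) :
    2 * q α n ≤ q α (n+2) := by
  have ha := one_le_a hα hirr (n+1)
  have hle := q_le_q_succ hα hirr n
  have h1 := one_le_q hα hirr n
  rw [q_rec]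
  nlinarith

lemma pow_two_q_le {α : ℝ} (hα : α ∈ Set.Ioo (0 : ℝ) 1) (hirr : Irrational α) (k n : ℕ) :
    2^k * q α n ≤ q α (n + 2*k) := by
  induction k with
  | zero => simp
  | succ k ih =>
    have h2 := two_q_le hα hirr (n + 2*k)
    have heq : n + 2*(k+1) = (n + 2*k) + 2 := by ring
    rw [heq, pow_succ]
    calc 2^k * 2 * q α n = 2 * (2^k * q α n) := by ring
    _ ≤ 2 * q α (n + 2*k) := by omega
    _ ≤ q α (n + 2*k + 2) := h2

lemma det {α : ℝ} (n : ℕ) :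
    (p α (n+1) : ℤ) * q α n - (p α n : ℤ) * q α (n+1) = (-1)^n := by
  induction n with
  | zero => simp [CF.p, CF.q, q_one]
  | succ n ih =>
    have hp : (p α (n+2) : ℤ) = a α (n+2) * p α (n+1) + p α n := by
      rw [p_rec]; push_cast; ring
    have hq : (q α (n+2) : ℤ) = a α (n+2) * q α (n+1) + q α n := by
      rw [q_rec]; push_cast; ring
    rw [hp, hq, pow_succ]
    nlinarith [ih]

lemma key_id {α : ℝ} (hα : α ∈ Set.Ioo (0 : ℝ) 1) (hirr : Irrational α) (n : ℕ) :
    (q α (n+1) : ℝ) * T α n + (q α n : ℝ) * T α (n+1) = 1 := by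
  have hdet : ((p α (n+1) : ℝ)) * q α n - (p α n : ℝ) * q α (n+1) = (-1)^n := by
    exact_mod_cast congrArg (fun z : ℤ => (z : ℝ)) (det (α := α) n)
  have h1 : (q α (n+1) : ℝ) * θ α n - (q α n : ℝ) * θ α (n+1) = (-1)^n := by
    simp only [θ]
    linear_combination hdet
  rw [theta_eq hα hirr n, theta_eq hα hirr (n+1)] at h1
  rcases Nat.even_or_odd n with he | ho
  · rw [he.neg_one_pow] at h1
    have hp1 : ((-1:ℝ))^(n+1) = -1 := by
      rw [pow_succ, he.neg_one_pow]; ring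
    rw [hp1] at h1
    linarith
  · rw [ho.neg_one_pow] at h1
    have hp1 : ((-1:ℝ))^(n+1) = 1 := by
      rw [pow_succ, ho.neg_one_pow]; ring
    rw [hp1] at h1
    linarith

lemma qr_pos {α : ℝ} (hα : α ∈ Set.Ioo (0 : ℝ) 1) (hirr : Irrational α) (n : ℕ) :
    (0:ℝ) < (q α n : ℝ) := by
  have := one_le_q hα hirr n
  exact_mod_cast Nat.lt_of_lt_of_le Nat.zero_lt_one this

lemma qT_lt_one {α : ℝ} (hα : α ∈ Set.Ioo (0 : ℝ) 1) (hirr : Irrational α) (n : ℕ) :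
    (q α (n+1) : ℝ) * T α n < 1 := by
  have h := key_id hα hirr n
  have h1 := qr_pos hα hirr n
  have h2 := T_pos hα hirr (n+1)
  nlinarith

lemma one_le_sum_qT {α : ℝ} (hα : α ∈ Set.Ioo (0 : ℝ) 1) (hirr : Irrational α) (n : ℕ) :
    1 ≤ ((q α (n+1) : ℝ) + (q α n : ℝ)) * T α n := by
  have h := key_id hα hirr n
  have h2 := T_succ_lt hα hirr n
  have h1 := qr_pos hα hirr n
  nlinarith

lemma int_rel {α : ℝ} (n m : ℕ) :
    (q α n : ℝ) * θ α m - (q α m : ℝ) * θ α n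
      = ((q α m : ℤ) * p α n - (q α n : ℤ) * p α m : ℤ) := by
  simp only [θ]
  push_cast
  ring

lemma exists_m {α : ℝ} (hunb : ∀ M : ℕ, ∃ n : ℕ, M < a α n) :
    ∃ m : ℕ → ℕ, (∀ k, 16 ≤ a α (m k)) ∧ (∀ k, m k + 10 ≤ m (k+1)) ∧
      (∀ k, 2^k + 12 ≤ m k) := by
  have pickP : ∀ N : ℕ, ∃ n, N ≤ n ∧ 16 ≤ a α n := by
    intro N
    obtain ⟨n, hn⟩ := hunb (max 16 ((Finset.range N).sup (a α)))
    have h16 : 16 < a α n := lt_of_le_of_lt (le_max_left _ _) hn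
    refine ⟨n, ?_, h16.le⟩
    by_contra h
    push_neg at h
    have : a α n ≤ (Finset.range N).sup (a α) := Finset.le_sup (Finset.mem_range.mpr h)
    have := lt_of_le_of_lt (le_max_right 16 ((Finset.range N).sup (a α))) hn
    omega
  choose pick hpick1 hpick2 using pickP
  refine ⟨fun k => Nat.rec (pick 13) (fun k mk => pick (max (mk + 10) (2^(k+1) + 12))) k,
    ?_, ?_, ?_⟩
  · intro k
    cases k with
    | zero => exact hpick2 13
    | succ k => exact hpick2 _
  · intro k
    exact le_trans (le_max_left _ _) (hpick1 _)
  · intro k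
    induction k with
    | zero => simpa using hpick1 13
    | succ k _ =>
      exact le_trans (le_max_right _ _) (hpick1 _)

lemma sum_le_geom {v : ℕ → ℝ} (h0 : ∀ k, 0 ≤ v k) (hh : ∀ k, 2 * v k ≤ v (k+1)) (K : ℕ) :
    ∑ k ∈ Finset.range (K+1), v k ≤ 2 * v K := by
  induction K with
  | zero => simpa using by nlinarith [h0 0]
  | succ K ih =>
    rw [Finset.sum_range_succ]
    have := hh K
    linarith

lemma tsum_le_geom {u : ℕ → ℝ} (h0 : ∀ k, 0 ≤ u k) (hh : ∀ k, 2 * u (k+1) ≤ u k) :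
    Summable u ∧ ∑' k, u k ≤ 2 * u 0 := by
  have hb : ∀ k, u k ≤ u 0 * (1/2)^k := by
    intro k
    induction k with
    | zero => simp
    | succ k ih =>
      have := hh k
      rw [pow_succ]
      nlinarith [h0 (k+1)]
  have hs : Summable (fun k => u 0 * (1/2:ℝ)^k) :=
    (summable_geometric_of_lt_one (by norm_num) (by norm_num)).mul_left _
  have hsu : Summable u := Summable.of_nonneg_of_le h0 hb hs
  refine ⟨hsu, ?_⟩
  calc ∑' k, u k ≤ ∑' k, u 0 * (1/2:ℝ)^k := hsu.tsum_le_tsum hb hs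
  _ = u 0 * (1 - 1/2)⁻¹ := by
      rw [tsum_mul_left, tsum_geometric_of_lt_one (by norm_num) (by norm_num)]
  _ = 2 * u 0 := by norm_num; ring

section Construction

variable {α : ℝ} {m : ℕ → ℕ}

/-- Bundle of properties of the chosen subsequence. -/
structure Sub (α : ℝ) (m : ℕ → ℕ) : Prop where
  h16 : ∀ k, 16 ≤ a α (m k)
  hgap : ∀ k, m k + 10 ≤ m (k+1)
  hlow : ∀ k, 2^k + 12 ≤ m k

def bb (α : ℝ) (m : ℕ → ℕ) (k : ℕ) : ℕ := a α (m k) / 2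

def cc (α : ℝ) (m : ℕ → ℕ) (k : ℕ) : ℝ := (bb α m k : ℝ) * θ α (m k - 1)

def gg (α : ℝ) (m : ℕ → ℕ) (n k : ℕ) : ℝ :=
  if m k ≤ n then (bb α m k : ℝ) * (q α (m k - 1) : ℝ) * θ α n
  else (q α n : ℝ) * cc α m k

def beta0 (α : ℝ) (m : ℕ → ℕ) : ℝ := ∑' k, cc α m k

def gam (α : ℝ) (m : ℕ → ℕ) (n : ℕ) : ℝ := ∑' k, gg α m n k

lemma m_twelve (hs : Sub α m) (k : ℕ) : 13 ≤ m k := by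
  have := hs.hlow k
  have : 1 ≤ 2^k := Nat.one_le_two_pow
  omega

lemma m_strict (hs : Sub α m) {j k : ℕ} (h : j < k) : m j + 10 ≤ m k := by
  induction k with
  | zero => omega
  | succ k ih =>
    rcases Nat.lt_succ_iff_lt_or_eq.mp h with h | h
    · have := hs.hgap k
      have := ih h
      omega
    · subst h; exact hs.hgap j

lemma m_mono (hs : Sub α m) : StrictMono m := by
  intro j k h
  have := m_strict hs h
  omega

lemma abs_theta (hα : α ∈ Set.Ioo (0 : ℝ) 1) (hirr : Irrational α) (n : ℕ) :
    |θ α n| = T α n := by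
  rw [theta_eq hα hirr n, abs_mul, abs_pow, abs_neg, abs_one, one_pow, one_mul,
    abs_of_pos (T_pos hα hirr n)]

lemma bb_le (k : ℕ) : 2 * bb α m k ≤ a α (m k) := by
  unfold bb; omega

lemma le_bb (k : ℕ) : a α (m k) ≤ 2 * bb α m k + 1 := by
  unfold bb; omega

lemma aq_le (hs : Sub α m) (k : ℕ) :
    a α (m k) * q α (m k - 1) ≤ q α (m k) := by
  obtain ⟨t, ht⟩ : ∃ t, m k = t + 2 := ⟨m k - 2, by have := m_twelve hs k; omega⟩
  rw [ht, q_rec]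
  have : m k - 1 = t + 1 := by omega
  rw [ht] at this
  simp [this]

lemma q_le_aq (hα : α ∈ Set.Ioo (0 : ℝ) 1) (hirr : Irrational α) (hs : Sub α m) (k : ℕ) :
    q α (m k) ≤ (a α (m k) + 1) * q α (m k - 1) := by
  obtain ⟨t, ht⟩ : ∃ t, m k = t + 2 := ⟨m k - 2, by have := m_twelve hs k; omega⟩
  have h1 : m k - 1 = t + 1 := by omega
  rw [ht] at h1 ⊢
  rw [q_rec, h1]
  have := q_le_q_succ hα hirr t
  nlinarith [this]

lemma sub_add (hs : Sub α m) (k : ℕ) : m k - 1 + 1 = m k := by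
  have := m_twelve hs k; omega

lemma qT_mk_lt (hα : α ∈ Set.Ioo (0 : ℝ) 1) (hirr : Irrational α) (hs : Sub α m) (k : ℕ) :
    (q α (m k) : ℝ) * T α (m k - 1) < 1 := by
  have h := qT_lt_one hα hirr (m k - 1)
  rwa [sub_add hs] at h

lemma one_le_qT_mk (hα : α ∈ Set.Ioo (0 : ℝ) 1) (hirr : Irrational α) (hs : Sub α m) (k : ℕ) :
    1 ≤ ((q α (m k) : ℝ) + (q α (m k - 1) : ℝ)) * T α (m k - 1) := by
  have h := one_le_sum_qT hα hirr (m k - 1)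
  rwa [sub_add hs] at h

lemma cc_abs (hα : α ∈ Set.Ioo (0 : ℝ) 1) (hirr : Irrational α) (k : ℕ) :
    |cc α m k| = (bb α m k : ℝ) * T α (m k - 1) := by
  rw [cc, abs_mul, abs_theta hα hirr, Nat.abs_cast]

lemma cc_bound (hα : α ∈ Set.Ioo (0 : ℝ) 1) (hirr : Irrational α) (hs : Sub α m) (k : ℕ) :
    |cc α m k| * (2 * (q α (m k - 1) : ℝ)) ≤ 1 := by
  rw [cc_abs hα hirr]
  have h1 : ((2 * bb α m k : ℕ) : ℝ) * (q α (m k - 1) : ℝ) ≤ ((q α (m k)) : ℝ) := by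
    have h2 := bb_le (α := α) (m := m) k
    have h3 := aq_le hs k
    have : (2 * bb α m k) * q α (m k - 1) ≤ q α (m k) :=
      le_trans (Nat.mul_le_mul_right _ h2) h3
    exact_mod_cast this
  have h4 := qT_mk_lt hα hirr hs k
  have h5 := T_pos hα hirr (m k - 1)
  push_cast at h1
  nlinarith

lemma q_gap32 (hα : α ∈ Set.Ioo (0 : ℝ) 1) (hirr : Irrational α) (hs : Sub α m) (k : ℕ) :
    32 * q α (m k) ≤ q α (m (k+1)) := by
  have h1 : (2:ℕ)^5 * q α (m k) ≤ q α (m k + 2*5) := pow_two_q_le hα hirr 5 (m k)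
  have h2 : q α (m k + 10) ≤ q α (m (k+1)) := q_mono hα hirr (hs.hgap k)
  norm_num at h1
  omega

lemma q'_gap32 (hα : α ∈ Set.Ioo (0 : ℝ) 1) (hirr : Irrational α) (hs : Sub α m) (k : ℕ) :
    32 * q α (m k - 1) ≤ q α (m (k+1) - 1) := by
  have h1 : (2:ℕ)^5 * q α (m k - 1) ≤ q α (m k - 1 + 2*5) := pow_two_q_le hα hirr 5 _
  have h2 : q α (m k - 1 + 10) ≤ q α (m (k+1) - 1) := by
    apply q_mono hα hirr
    have := hs.hgap k
    have := m_twelve hs k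
    omega
  norm_num at h1
  omega

lemma q'_pow (hα : α ∈ Set.Ioo (0 : ℝ) 1) (hirr : Irrational α) (hs : Sub α m) (k : ℕ) :
    2^k ≤ q α (m k - 1) := by
  induction k with
  | zero => simpa using one_le_q hα hirr _
  | succ k ih =>
    have h1 := q'_gap32 hα hirr hs k
    have : 2^(k+1) = 2 * 2^k := by ring
    omega

lemma cc_le_geom (hα : α ∈ Set.Ioo (0 : ℝ) 1) (hirr : Irrational α) (hs : Sub α m) (k : ℕ) :
    |cc α m k| ≤ (1/2:ℝ)^(k+1) := by
  have h1 := cc_bound hα hirr hs k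
  have h2 : ((2:ℝ)^k) ≤ (q α (m k - 1) : ℝ) := by exact_mod_cast q'_pow hα hirr hs k
  have h3 : (0:ℝ) < 2^k := by positivity
  have h4 : (0:ℝ) ≤ |cc α m k| := abs_nonneg _
  have h5 : |cc α m k| * (2 * 2^k) ≤ 1 := by nlinarith
  rw [div_pow, one_pow, pow_succ]
  rw [le_div_iff₀ (by positivity)]
  nlinarith

lemma cc_summable (hα : α ∈ Set.Ioo (0 : ℝ) 1) (hirr : Irrational α) (hs : Sub α m) :
    Summable (cc α m) := by
  apply Summable.of_norm_bounded (Summable.mul_left ((1:ℝ)/2)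
    (summable_geometric_of_lt_one (r := (1/2:ℝ)) (by norm_num) (by norm_num)))
  intro k
  have := cc_le_geom hα hirr hs k
  rw [Real.norm_eq_abs]
  calc |cc α m k| ≤ (1/2:ℝ)^(k+1) := this
  _ = 1/2 * (1/2)^k := by ring

lemma k_lt_mk (hs : Sub α m) (k : ℕ) : k < m k := by
  have h1 := hs.hlow k
  have h2 : k < 2^k := Nat.lt_two_pow_self
  omega

lemma gg_eq_tail (n k : ℕ) (h : ¬ m k ≤ n) :
    gg α m n k = (q α n : ℝ) * cc α m k := by
  rw [gg, if_neg h]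

lemma gg_summable (hα : α ∈ Set.Ioo (0 : ℝ) 1) (hirr : Irrational α) (hs : Sub α m)
    (n : ℕ) : Summable (gg α m n) := by
  have h1 : Summable (fun k => (q α n : ℝ) * cc α m k) :=
    (cc_summable hα hirr hs).mul_left _
  have h2 : Summable (fun k => gg α m n k - (q α n : ℝ) * cc α m k) := by
    apply summable_of_ne_finset_zero (s := Finset.range (n+1))
    intro k hk
    simp only [Finset.mem_range] at hk
    have hm : ¬ m k ≤ n := by
      have := k_lt_mk hs k
      omega
    rw [gg_eq_tail n k hm, sub_self]
  simpa using h2.add h1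

def zz (α : ℝ) (m : ℕ → ℕ) (n k : ℕ) : ℤ :=
  if m k ≤ n then
    (bb α m k : ℤ) * ((q α (m k - 1) : ℤ) * p α n - (q α n : ℤ) * p α (m k - 1))
  else 0

lemma term_eq_zz (n k : ℕ) :
    (q α n : ℝ) * cc α m k - gg α m n k = ((zz α m n k : ℤ) : ℝ) := by
  by_cases h : m k ≤ n
  · rw [gg, if_pos h, zz, if_pos h, cc]
    have := int_rel (α := α) n (m k - 1)
    push_cast
    push_cast at this
    nlinarith [this]
  · rw [gg_eq_tail n k h, zz, if_neg h]
    simp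

lemma shift (hα : α ∈ Set.Ioo (0 : ℝ) 1) (hirr : Irrational α) (hs : Sub α m) (n : ℕ) :
    ∃ z : ℤ, (q α n : ℝ) * beta0 α m = gam α m n + z := by
  refine ⟨∑ k ∈ Finset.range (n+1), zz α m n k, ?_⟩
  have h1 : Summable (fun k => (q α n : ℝ) * cc α m k) :=
    (cc_summable hα hirr hs).mul_left _
  have h2 := gg_summable hα hirr hs n
  have h3 : (q α n : ℝ) * beta0 α m - gam α m n
      = ∑' k, ((q α n : ℝ) * cc α m k - gg α m n k) := by
    rw [beta0, ← tsum_mul_left, gam, ← h1.tsum_sub h2]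
  have h4 : ∑' k, ((q α n : ℝ) * cc α m k - gg α m n k)
      = ∑ k ∈ Finset.range (n+1), ((q α n : ℝ) * cc α m k - gg α m n k) := by
    apply tsum_eq_sum
    intro k hk
    simp only [Finset.mem_range] at hk
    have hm : ¬ m k ≤ n := by
      have := k_lt_mk hs k
      omega
    rw [gg_eq_tail n k hm, sub_self]
  have h5 : ∑ k ∈ Finset.range (n+1), ((q α n : ℝ) * cc α m k - gg α m n k)
      = ((∑ k ∈ Finset.range (n+1), zz α m n k : ℤ) : ℝ) := by
    push_cast
    exact Finset.sum_congr rfl fun k _ => term_eq_zz n k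
  have := h3.trans (h4.trans h5)
  linarith

lemma coe_int_circle (z : ℤ) : (((z : ℝ)) : Circle1) = 0 := by
  have h : ((z:ℝ)) = z • (1:ℝ) := by simp
  rw [h, AddCircle.coe_zsmul, AddCircle.coe_period, smul_zero]

lemma smul_beta_eq (hα : α ∈ Set.Ioo (0 : ℝ) 1) (hirr : Irrational α) (hs : Sub α m)
    (n : ℕ) :
    ((q α n : ℤ) • ((beta0 α m : ℝ) : Circle1)) = ((gam α m n : ℝ) : Circle1) := by
  obtain ⟨z, hz⟩ := shift hα hirr hs n
  rw [← AddCircle.coe_zsmul]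
  have h1 : (q α n : ℤ) • (beta0 α m) = (q α n : ℝ) * beta0 α m := by
    rw [zsmul_eq_mul]; norm_num
  rw [h1, hz, AddCircle.coe_add, coe_int_circle, add_zero]

lemma norm_circle_le (x : ℝ) : ‖((x : ℝ) : Circle1)‖ ≤ |x| := by
  rw [AddCircle.norm_eq]
  simpa using round_le x 0

lemma norm_circle_ge {x : ℝ} (h1 : 1/4 ≤ |x|) (h2 : |x| ≤ 3/4) :
    1/4 ≤ ‖((x : ℝ) : Circle1)‖ := by
  rw [AddCircle.norm_eq]
  simp only [inv_one, one_mul, mul_one]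
  rcases eq_or_ne (round x) 0 with h | h
  · rw [h]; simpa using h1
  · have hge : (1:ℝ) ≤ |(round x : ℝ)| := by
      exact_mod_cast Int.one_le_abs (by omega)
    have := abs_sub_abs_le_abs_sub ((round x : ℝ)) x
    rw [abs_sub_comm] at this
    linarith

lemma head_bound (hα : α ∈ Set.Ioo (0 : ℝ) 1) (hirr : Irrational α) (hs : Sub α m)
    (n K : ℕ) (hK : ∀ k, k < K + 1 → m k ≤ n) :
    |∑ k ∈ Finset.range (K+1), gg α m n k| ≤ (q α (m K) : ℝ) * T α n := by
  have hTpos := T_pos hα hirr n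
  set v : ℕ → ℝ := fun k => (q α (m k) : ℝ)/2 * T α n with hv
  have hv0 : ∀ k, (0:ℝ) ≤ v k := fun k => by positivity
  have hvr : ∀ k, 2 * v k ≤ v (k+1) := by
    intro k
    have h32 : (32:ℝ) * (q α (m k):ℝ) ≤ q α (m (k+1)) := by
      exact_mod_cast q_gap32 hα hirr hs k
    simp only [hv]
    nlinarith
  have hterm : ∀ k ∈ Finset.range (K+1), |gg α m n k| ≤ v k := by
    intro k hk
    rw [Finset.mem_range] at hk
    rw [gg, if_pos (hK k hk), abs_mul, abs_mul, Nat.abs_cast, Nat.abs_cast,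
      abs_theta hα hirr]
    have h1 : ((2 * bb α m k : ℕ) : ℝ) * (q α (m k - 1) : ℝ) ≤ ((q α (m k)) : ℝ) := by
      exact_mod_cast le_trans (Nat.mul_le_mul_right _ (bb_le k)) (aq_le hs k)
    push_cast at h1
    simp only [hv]
    nlinarith
  calc |∑ k ∈ Finset.range (K+1), gg α m n k|
      ≤ ∑ k ∈ Finset.range (K+1), |gg α m n k| := Finset.abs_sum_le_sum_abs _ _
  _ ≤ ∑ k ∈ Finset.range (K+1), v k := Finset.sum_le_sum hterm
  _ ≤ 2 * v K := sum_le_geom hv0 hvr K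
  _ = (q α (m K) : ℝ) * T α n := by simp only [hv]; ring

lemma tail_bound (hα : α ∈ Set.Ioo (0 : ℝ) 1) (hirr : Irrational α) (hs : Sub α m)
    (n K : ℕ) (hK : ∀ k, K ≤ k → n < m k) :
    |∑' k, gg α m n (k+K)| ≤ (q α n : ℝ) / (q α (m K - 1) : ℝ) := by
  set u : ℕ → ℝ := fun k => (q α n : ℝ) / (2 * (q α (m (k+K) - 1) : ℝ)) with hu
  have hqn := qr_pos hα hirr n
  have hq' : ∀ k, (0:ℝ) < (q α (m (k+K) - 1) : ℝ) := fun k => qr_pos hα hirr _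
  have hu0 : ∀ k, 0 ≤ u k := fun k => by
    simp only [hu]; positivity
  have hur : ∀ k, 2 * u (k+1) ≤ u k := by
    intro k
    have h32 : (32:ℝ) * (q α (m (k+K) - 1):ℝ) ≤ (q α (m (k+1+K) - 1):ℝ) := by
      have := q'_gap32 hα hirr hs (k+K)
      have he : k + K + 1 = k + 1 + K := by ring
      rw [he] at this
      exact_mod_cast this
    simp only [hu]
    have he1 : 2 * ((q α n : ℝ) / (2 * (q α (m (k+1+K) - 1) : ℝ)))
        = (q α n : ℝ) / (q α (m (k+1+K) - 1) : ℝ) := by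
      field_simp
    rw [he1, div_le_div_iff₀ (hq' (k+1)) (mul_pos two_pos (hq' k))]
    nlinarith [hq' k, hq' (k+1)]
  obtain ⟨husum, hule⟩ := tsum_le_geom hu0 hur
  have habs : ∀ k, |gg α m n (k+K)| ≤ u k := by
    intro k
    have hnm : ¬ m (k+K) ≤ n := by
      have := hK (k+K) (by omega)
      omega
    rw [gg_eq_tail n _ hnm, abs_mul, Nat.abs_cast]
    have hcb := cc_bound hα hirr hs (k+K)
    simp only [hu]
    rw [le_div_iff₀ (mul_pos two_pos (hq' k))]
    nlinarith [hq' k, abs_nonneg (cc α m (k+K))]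
  have hgsum : Summable (fun k => gg α m n (k+K)) := by
    apply Summable.of_norm_bounded husum
    intro k
    rw [Real.norm_eq_abs]
    exact habs k
  have habs_sum : Summable (fun k => |gg α m n (k+K)|) := by
    have := hgsum.abs
    exact this
  calc |∑' k, gg α m n (k+K)| ≤ ∑' k, |gg α m n (k+K)| := by
        have h := norm_tsum_le_tsum_norm (f := fun k => gg α m n (k+K)) ?_
        · simpa [Real.norm_eq_abs] using h
        · simpa [Real.norm_eq_abs] using habs_sum
  _ ≤ ∑' k, u k := habs_sum.tsum_le_tsum habs husum
  _ ≤ 2 * u 0 := hule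
  _ = (q α n : ℝ) / (q α (m K - 1) : ℝ) := by
      simp only [hu, Nat.zero_add]
      have h0 : (q α (m K - 1) : ℝ) ≠ 0 := (qr_pos hα hirr _).ne'
      field_simp

lemma pow_half_mul (W : ℕ) : ((1/2:ℝ))^W * 2^W = 1 := by
  rw [← mul_pow]; norm_num

lemma gam_small (hα : α ∈ Set.Ioo (0 : ℝ) 1) (hirr : Irrational α) (hs : Sub α m)
    (n W K : ℕ)
    (hK1 : ∀ k, k < K → m k ≤ n)
    (hK2 : ∀ k, K ≤ k → n < m k)
    (hfar1 : ∀ k, k < K → m k + 2*W ≤ n)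
    (hfar2 : n + 2*W ≤ m K - 1) :
    |gam α m n| ≤ 2 * (1/2:ℝ)^W := by
  have hsplit : gam α m n = (∑ k ∈ Finset.range K, gg α m n k) + ∑' k, gg α m n (k+K) :=
    (Summable.sum_add_tsum_nat_add K (gg_summable hα hirr hs n)).symm
  have hpow := pow_half_mul W
  have hpowpos : (0:ℝ) < (1/2:ℝ)^W := by positivity
  have h2pos : (0:ℝ) < (2:ℝ)^W := by positivity
  -- tail bound
  have htail : |∑' k, gg α m n (k+K)| ≤ (1/2:ℝ)^W := by
    have h1 := tail_bound hα hirr hs n K hK2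
    have h2 : (2:ℕ)^W * q α n ≤ q α (m K - 1) := by
      calc (2:ℕ)^W * q α n ≤ q α (n + 2*W) := pow_two_q_le hα hirr W n
      _ ≤ q α (m K - 1) := q_mono hα hirr hfar2
    have h2' : (2:ℝ)^W * (q α n : ℝ) ≤ (q α (m K - 1) : ℝ) := by exact_mod_cast h2
    have hq'pos : (0:ℝ) < (q α (m K - 1) : ℝ) := qr_pos hα hirr _
    have hqn : (0:ℝ) < (q α n : ℝ) := qr_pos hα hirr _
    have h3 : (q α n : ℝ) / (q α (m K - 1) : ℝ) ≤ (1/2:ℝ)^W := by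
      rw [div_le_iff₀ hq'pos]
      nlinarith
    linarith
  -- head bound
  rcases Nat.eq_zero_or_pos K with hK0 | hKpos
  · subst hK0
    simp only [Finset.range_zero, Finset.sum_empty, zero_add] at hsplit
    rw [hsplit]
    nlinarith
  · obtain ⟨J, rfl⟩ : ∃ J, K = J + 1 := ⟨K - 1, by omega⟩
    have hhead : |∑ k ∈ Finset.range (J+1), gg α m n k| ≤ (1/2:ℝ)^W := by
      have h1 := head_bound hα hirr hs n J (fun k hk => hK1 k hk)
      have hTn := T_pos hα hirr n
      have hqT := qT_lt_one hα hirr n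
      have h2 : (2:ℕ)^W * q α (m J) ≤ q α (n+1) := by
        calc (2:ℕ)^W * q α (m J) ≤ q α (m J + 2*W) := pow_two_q_le hα hirr W _
        _ ≤ q α (n+1) := q_mono hα hirr (by have := hfar1 J (by omega); omega)
      have h2' : (2:ℝ)^W * (q α (m J) : ℝ) ≤ (q α (n+1) : ℝ) := by exact_mod_cast h2
      have hqJ : (0:ℝ) < (q α (m J) : ℝ) := qr_pos hα hirr _
      have hqn1 : (0:ℝ) < (q α (n+1) : ℝ) := qr_pos hα hirr _
      have h3 : (q α (m J) : ℝ) * T α n ≤ (1/2:ℝ)^W := by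
        nlinarith [mul_le_mul_of_nonneg_right h2' hTn.le]
      linarith
    rw [hsplit]
    calc |∑ k ∈ Finset.range (J+1), gg α m n k + ∑' k, gg α m n (k+(J+1))|
        ≤ |∑ k ∈ Finset.range (J+1), gg α m n k| + |∑' k, gg α m n (k+(J+1))| :=
          abs_add_le _ _
    _ ≤ 2 * (1/2:ℝ)^W := by linarith

lemma gam_big (hα : α ∈ Set.Ioo (0 : ℝ) 1) (hirr : Irrational α) (hs : Sub α m)
    (j : ℕ) :
    1/4 ≤ |gam α m (m j - 1)| ∧ |gam α m (m j - 1)| ≤ 3/4 := by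
  set n := m j - 1 with hn
  have hsplit : gam α m n = (∑ k ∈ Finset.range (j+1), gg α m n k)
      + ∑' k, gg α m n (k+(j+1)) :=
    (Summable.sum_add_tsum_nat_add (j+1) (gg_summable hα hirr hs n)).symm
  rw [Finset.sum_range_succ] at hsplit
  -- tail
  have htail : |∑' k, gg α m n (k+(j+1))| ≤ 1/32 := by
    have h1 := tail_bound hα hirr hs n (j+1) (fun k hk => by
      have h2 := m_strict hs (show j < k from hk)
      have := m_twelve hs j
      omega)
    have h32 : (32:ℝ) * (q α (m j - 1) : ℝ) ≤ (q α (m (j+1) - 1) : ℝ) := by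
      exact_mod_cast q'_gap32 hα hirr hs j
    have hp1 : (0:ℝ) < (q α (m j - 1) : ℝ) := qr_pos hα hirr _
    have hp2 : (0:ℝ) < (q α (m (j+1) - 1) : ℝ) := qr_pos hα hirr _
    have h3 : (q α n : ℝ) / (q α (m (j+1) - 1) : ℝ) ≤ 1/32 := by
      rw [div_le_iff₀ hp2, hn]
      nlinarith
    linarith
  -- head
  have hhead : |∑ k ∈ Finset.range j, gg α m n k| ≤ 1/32 := by
    rcases Nat.eq_zero_or_pos j with hj0 | hjpos
    · subst hj0; simp
    · obtain ⟨J, rfl⟩ : ∃ J, j = J + 1 := ⟨j - 1, by omega⟩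
      have h1 := head_bound hα hirr hs n J (fun k hk => by
        have h2 := m_strict hs (show k < J+1 from hk)
        have := m_twelve hs k
        omega)
      have hqT := qT_mk_lt hα hirr hs (J+1)
      have hTn : T α n = T α (m (J+1) - 1) := by rw [hn]
      have h32 : (32:ℝ) * (q α (m J) : ℝ) ≤ (q α (m (J+1)) : ℝ) := by
        exact_mod_cast q_gap32 hα hirr hs J
      have hTpos := T_pos hα hirr n
      have hqJ : (0:ℝ) < (q α (m J) : ℝ) := qr_pos hα hirr _
      have h3 : (q α (m J) : ℝ) * T α n ≤ 1/32 := by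
        rw [hTn] at hTpos ⊢
        nlinarith
      linarith
  -- middle term
  have hmidn : ¬ m j ≤ n := by have := m_twelve hs j; omega
  have hmid_eq : gg α m n j = (q α n : ℝ) * cc α m j := gg_eq_tail n j hmidn
  have hmid_abs : |gg α m n j| = (bb α m j : ℝ) * ((q α (m j - 1) : ℝ) * T α (m j - 1)) := by
    rw [hmid_eq, abs_mul, Nat.abs_cast, cc_abs hα hirr, hn]
    ring
  have hAreal : (16:ℝ) ≤ (a α (m j) : ℝ) := by exact_mod_cast hs.h16 j
  have hxpos : (0:ℝ) < (q α (m j - 1) : ℝ) * T α (m j - 1) :=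
    mul_pos (qr_pos hα hirr _) (T_pos hα hirr _)
  have hbbge : (a α (m j) : ℝ) - 1 ≤ 2 * (bb α m j : ℝ) := by
    have := le_bb (α := α) (m := m) j
    have h : (a α (m j) : ℝ) ≤ 2 * (bb α m j : ℝ) + 1 := by exact_mod_cast this
    linarith
  have hbble : 2 * (bb α m j : ℝ) ≤ (a α (m j) : ℝ) := by exact_mod_cast bb_le j
  have hmid_up : |gg α m n j| ≤ 1/2 := by
    have hcb := cc_bound hα hirr hs j
    rw [hmid_abs]
    rw [cc_abs hα hirr] at hcb
    have hbbpos : (0:ℝ) ≤ (bb α m j : ℝ) := Nat.cast_nonneg _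
    nlinarith [T_pos hα hirr (m j - 1)]
  have hmid_low : 3/8 ≤ |gg α m n j| := by
    have hx1 : 1 ≤ ((a α (m j) : ℝ) + 2) * ((q α (m j - 1) : ℝ) * T α (m j - 1)) := by
      have h1 := one_le_qT_mk hα hirr hs j
      have h2 : (q α (m j) : ℝ) ≤ ((a α (m j) : ℝ) + 1) * (q α (m j - 1) : ℝ) := by
        exact_mod_cast q_le_aq hα hirr hs j
      nlinarith [T_pos hα hirr (m j - 1)]
    rw [hmid_abs]
    set x := (q α (m j - 1) : ℝ) * T α (m j - 1) with hx
    set A := (a α (m j) : ℝ) with hA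
    have h1 : 0 ≤ (A - 10) * x := mul_nonneg (by linarith) hxpos.le
    have h2 : 0 ≤ (2 * (bb α m j : ℝ) - (A - 1)) * x :=
      mul_nonneg (by linarith) hxpos.le
    nlinarith
  constructor
  · have habs_sub : ∀ x y : ℝ, |x - y| ≤ |x| + |y| := fun x y => by
      rw [sub_eq_add_neg]
      exact (abs_add_le x (-y)).trans (by rw [abs_neg])
    set S := (∑ k ∈ Finset.range j, gg α m n k) + gg α m n j
      + ∑' k, gg α m n (k+(j+1)) with hS
    have h1 : gg α m n j = S - (∑ k ∈ Finset.range j, gg α m n k)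
        - ∑' k, gg α m n (k+(j+1)) := by rw [hS]; ring
    have h2 : |gg α m n j| ≤ |S - (∑ k ∈ Finset.range j, gg α m n k)|
        + |∑' k, gg α m n (k+(j+1))| := by
      rw [h1]
      exact habs_sub _ _
    have h3 : |S - (∑ k ∈ Finset.range j, gg α m n k)|
        ≤ |S| + |∑ k ∈ Finset.range j, gg α m n k| := habs_sub _ _
    rw [hsplit]
    linarith
  · rw [hsplit]
    calc |(∑ k ∈ Finset.range j, gg α m n k) + gg α m n j + ∑' k, gg α m n (k+(j+1))|
        ≤ |(∑ k ∈ Finset.range j, gg α m n k) + gg α m n j|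
          + |∑' k, gg α m n (k+(j+1))| := abs_add_le _ _
    _ ≤ |∑ k ∈ Finset.range j, gg α m n k| + |gg α m n j|
          + |∑' k, gg α m n (k+(j+1))| := by
        have := abs_add_le (∑ k ∈ Finset.range j, gg α m n k) (gg α m n j)
        linarith
    _ ≤ 3/4 := by linarith

lemma densityZero_subset {A B : Set ℕ} (h : A ⊆ B) (hB : DensityZero B) :
    DensityZero A := by
  apply squeeze_zero (g := fun n : ℕ => ((B ∩ Set.Icc 1 n).ncard : ℝ) / n)
  · intro n; positivity
  · intro n
    have hcard : ((A ∩ Set.Icc 1 n).ncard : ℝ) ≤ ((B ∩ Set.Icc 1 n).ncard : ℝ) := by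
      have h1 : (A ∩ Set.Icc 1 n).ncard ≤ (B ∩ Set.Icc 1 n).ncard := by
        apply Set.ncard_le_ncard (Set.inter_subset_inter_left _ h)
      exact_mod_cast h1
    exact div_le_div_of_nonneg_right hcard (Nat.cast_nonneg n)
  · exact hB

lemma hex (hs : Sub α m) (X : ℕ) : ∃ k, X < m k := by
  refine ⟨X, ?_⟩
  have := hs.hlow X
  have : X < 2^X := Nat.lt_two_pow_self
  omega

lemma counting (hs : Sub α m) (W N : ℕ) :
    (((⋃ k, Set.Icc (m k - 2*W) (m k + 2*W)) ∩ Set.Icc 1 N).ncard : ℝ)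
      ≤ (Nat.find (hex hs (N + 2*W)) : ℝ) * (4*W+1) := by
  classical
  set KK := Nat.find (hex hs (N + 2*W)) with hKK
  set F : Finset ℕ := (Finset.range KK).biUnion
    (fun k => Finset.Icc (m k - 2*W) (m k + 2*W)) with hF
  have hsub : (⋃ k, Set.Icc (m k - 2*W) (m k + 2*W)) ∩ Set.Icc 1 N ⊆ ↑F := by
    rintro x ⟨hx1, hx2⟩
    obtain ⟨S, ⟨k, rfl⟩, hxS⟩ := hx1
    simp only [Set.mem_Icc] at hxS hx2
    have hmk : m k ≤ N + 2*W := by omega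
    have hklt : k < KK := by
      by_contra hc
      push_neg at hc
      have h1 : m KK ≤ m k := (m_mono hs).monotone hc
      have h2 : N + 2*W < m KK := Nat.find_spec (hex hs (N + 2*W))
      omega
    simp only [hF, Finset.coe_biUnion, Set.mem_iUnion, Finset.mem_coe,
      Finset.mem_Icc, Finset.mem_range]
    exact ⟨k, hklt, hxS.1, hxS.2⟩
  have h1 : ((⋃ k, Set.Icc (m k - 2*W) (m k + 2*W)) ∩ Set.Icc 1 N).ncard ≤ F.card := by
    have := Set.ncard_le_ncard hsub F.finite_toSet
    rwa [Set.ncard_coe_finset] at this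
  have h2 : F.card ≤ KK * (4*W+1) := by
    calc F.card ≤ ∑ k ∈ Finset.range KK, (Finset.Icc (m k - 2*W) (m k + 2*W)).card :=
          Finset.card_biUnion_le
    _ ≤ ∑ _k ∈ Finset.range KK, (4*W+1) := by
        apply Finset.sum_le_sum
        intro k _
        rw [Nat.card_Icc]
        omega
    _ = KK * (4*W+1) := by
        rw [Finset.sum_const, Finset.card_range, smul_eq_mul]
  have : ((⋃ k, Set.Icc (m k - 2*W) (m k + 2*W)) ∩ Set.Icc 1 N).ncard ≤ KK * (4*W+1) :=
    le_trans h1 h2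
  exact_mod_cast this

lemma count_tendsto (hs : Sub α m) (W : ℕ) :
    Tendsto (fun N : ℕ => (Nat.find (hex hs (N + 2*W)) : ℝ) * (4*W+1) / N)
      atTop (𝓝 0) := by
  rw [NormedAddCommGroup.tendsto_nhds_zero]
  intro ε hε
  set D : ℝ := (4*W+1 : ℝ) with hD
  have hDpos : 0 < D := by rw [hD]; positivity
  -- eventually (k+1)*D + ε*(2*W) + 1 ≤ ε * 2^k
  have hlim : Tendsto (fun k : ℕ => (((k:ℝ)+1)*D + ε*(2*W) + 1) / 2^k) atTop (𝓝 0) := by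
    have l1 : Tendsto (fun k : ℕ => (k:ℝ) / 2^k) atTop (𝓝 0) := by
      have := tendsto_pow_const_div_const_pow_of_one_lt 1 (show (1:ℝ) < 2 by norm_num)
      simpa using this
    have l2 : Tendsto (fun k : ℕ => (1:ℝ) / 2^k) atTop (𝓝 0) := by
      have := tendsto_pow_atTop_nhds_zero_of_lt_one
        (show (0:ℝ) ≤ 1/2 by norm_num) (show (1/2:ℝ) < 1 by norm_num)
      simpa [div_pow] using this
    have : Tendsto (fun k : ℕ => D * ((k:ℝ)/2^k) + (D + ε*(2*W) + 1) * ((1:ℝ)/2^k))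
        atTop (𝓝 (D * 0 + (D + ε*(2*W) + 1) * 0)) :=
      ((l1.const_mul D).add (l2.const_mul (D + ε*(2*W) + 1)))
    simp only [mul_zero, add_zero] at this
    apply this.congr
    intro k
    field_simp
    ring
  have hev : ∀ᶠ k : ℕ in atTop, (((k:ℝ)+1)*D + ε*(2*W) + 1) / 2^k < ε :=
    hlim.eventually (gt_mem_nhds hε)
  obtain ⟨K₁, hK₁⟩ := eventually_atTop.mp hev
  rw [eventually_atTop]
  refine ⟨max (m K₁) 1, fun N hN => ?_⟩
  have hN1 : 1 ≤ N := le_trans (le_max_right _ _) hN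
  have hNm : m K₁ ≤ N := le_trans (le_max_left _ _) hN
  set KK := Nat.find (hex hs (N + 2*W)) with hKK
  have hKpos : K₁ < KK := by
    rw [hKK, Nat.lt_find_iff]
    intro j hj
    push_neg
    calc m j ≤ m K₁ := (m_mono hs).monotone hj
    _ ≤ N := hNm
    _ ≤ N + 2*W := by omega
  obtain ⟨J, hJ⟩ : ∃ J, KK = J + 1 := ⟨KK - 1, by omega⟩
  have hJK : K₁ ≤ J := by omega
  have hJle : m J ≤ N + 2*W := by
    have := Nat.find_min (hex hs (N + 2*W)) (show J < KK by omega)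
    omega
  have h2J : (2:ℕ)^J ≤ N + 2*W := by
    have := hs.hlow J
    omega
  have h2J' : (2:ℝ)^J ≤ (N:ℝ) + 2*W := by exact_mod_cast h2J
  have hkey := hK₁ J hJK
  rw [div_lt_iff₀ (by positivity)] at hkey
  have hNpos : (0:ℝ) < N := by exact_mod_cast hN1
  rw [Real.norm_eq_abs, abs_of_nonneg (by positivity), div_lt_iff₀ hNpos, hJ]
  push_cast
  nlinarith

lemma densityZero_U (hs : Sub α m) (W : ℕ) :
    DensityZero (⋃ k, Set.Icc (m k - 2*W) (m k + 2*W)) := by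
  apply squeeze_zero
    (g := fun N : ℕ => (Nat.find (hex hs (N + 2*W)) : ℝ) * (4*W+1) / N)
  · intro n; positivity
  · intro N
    exact div_le_div_of_nonneg_right (counting hs W N) (Nat.cast_nonneg N)
  · exact count_tendsto hs W

end Construction

theorem main_thm (α : ℝ) (hα : α ∈ Set.Ioo (0 : ℝ) 1) (hirr : Irrational α)
    (hunb : ∀ M : ℕ, ∃ n : ℕ, M < a α n) :
    ∃ β : Circle1, β ∈ statCharSet (fun n => (q α n : ℤ)) ∧
      β ∉ charSet (fun n => (q α n : ℤ)) := by
  obtain ⟨m, h16, hgap, hlow⟩ := exists_m hunb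
  have hs : Sub α m := ⟨h16, hgap, hlow⟩
  refine ⟨((beta0 α m : ℝ) : Circle1), ?_, ?_⟩
  · rw [statCharSet, Set.mem_setOf_eq]
    intro ε hε
    obtain ⟨W, hW⟩ : ∃ W : ℕ, 2*(1/2:ℝ)^W < ε := by
      have h1 : Tendsto (fun W : ℕ => 2*(1/2:ℝ)^W) atTop (𝓝 (2*0)) :=
        (tendsto_pow_atTop_nhds_zero_of_lt_one (by norm_num) (by norm_num)).const_mul 2
      rw [mul_zero] at h1
      exact (h1.eventually (gt_mem_nhds hε)).exists
    apply densityZero_subset ?_ (densityZero_U hs W)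
    intro n hn
    rw [Set.mem_setOf_eq] at hn
    by_contra hnU
    simp only [Set.mem_iUnion, Set.mem_Icc, not_exists, not_and, not_le] at hnU
    set K := Nat.find (hex hs n) with hK
    have hspec : n < m K := Nat.find_spec (hex hs n)
    have hK2 : ∀ k, K ≤ k → n < m k := fun k hk =>
      lt_of_lt_of_le hspec ((m_mono hs).monotone hk)
    have hK1 : ∀ k, k < K → m k ≤ n := by
      intro k hk
      have := Nat.find_min (hex hs n) hk
      omega
    have hfar1 : ∀ k, k < K → m k + 2*W ≤ n := by
      intro k hk
      have h1 := hK1 k hk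
      have h2 := hnU k
      omega
    have hfar2 : n + 2*W ≤ m K - 1 := by
      have h2 := hnU K
      omega
    have hsm := gam_small hα hirr hs n W K hK1 hK2 hfar1 hfar2
    have heq := smul_beta_eq hα hirr hs n
    change ε ≤ ‖(q α n : ℤ) • ((beta0 α m : ℝ) : Circle1)‖ at hn
    rw [heq] at hn
    have hle := norm_circle_le (gam α m n)
    linarith
  · intro hmem
    rw [charSet, Set.mem_setOf_eq, NormedAddCommGroup.tendsto_nhds_zero] at hmem
    have h14 := hmem (1/4) (by norm_num)
    rw [eventually_atTop] at h14
    obtain ⟨N₀, hN₀⟩ := h14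
    have hnge : N₀ ≤ m N₀ - 1 := by
      have h1 := hs.hlow N₀
      have h2 : N₀ < 2^N₀ := Nat.lt_two_pow_self
      omega
    have hb := gam_big hα hirr hs N₀
    have hnorm := norm_circle_ge hb.1 hb.2
    have heq := smul_beta_eq hα hirr hs (m N₀ - 1)
    have hlt := hN₀ (m N₀ - 1) hnge
    change ‖(q α (m N₀ - 1) : ℤ) • ((beta0 α m : ℝ) : Circle1)‖ < 1/4 at hlt
    rw [heq] at hlt
    linarith

end SC


/-- **Theorem 2.5.** For irrational `α` with unbounded partial quotients,
`t^s_(qₙ)(𝕋)` strictly contains `t_(qₙ)(𝕋)`. -/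
theorem stmt_6 (α : ℝ) (hα : α ∈ Set.Ioo (0 : ℝ) 1) (hirr : Irrational α)
    (hunb : ∀ M : ℕ, ∃ n : ℕ, M < a α n) :
    ∃ β : Circle1, β ∈ statCharSet (fun n => (q α n : ℤ)) ∧
      β ∉ charSet (fun n => (q α n : ℤ)) := by
  exact SC.main_thm α hα hirr hunb
end
end

section
/- Let α = [0; a₁, a₂, …] ∈ (0,1) be irrational with (aₙ) bounded, let (qₙ) be the denominators of the convergents of α, and let (xₙ) be the increasing enumeration of the set {r qₙ : n ∈ ℕ, 1 ≤ r ≤ a_{n+1}}. Then t^s_{(qₙ)}(𝕋) = t^s_{(xₙ)}(𝕋). -/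
open Filter Topology

noncomputable section

open CF

/- ### Auxiliary lemmas -/

lemma G_good (α : ℝ) (hα : α ∈ Set.Ioo (0:ℝ) 1) (hirr : Irrational α) :
    ∀ n, Irrational (G α n) ∧ G α n ∈ Set.Ioo (0:ℝ) 1 := by
  intro n
  induction n with
  | zero => exact ⟨hirr, hα⟩
  | succ k ih =>
    obtain ⟨hi, hm⟩ := ih
    have hf : Irrational (Int.fract (G α k)⁻¹) := by
      rw [Int.fract]
      exact hi.inv.sub_intCast _
    refine ⟨hf, ?_, Int.fract_lt_one _⟩
    rcases lt_or_eq_of_le (Int.fract_nonneg (G α k)⁻¹) with h | h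
    · exact h
    · exact absurd (by simpa using h.symm) (hf.ne_int 0)

lemma a_one_le (α : ℝ) (hα : α ∈ Set.Ioo (0:ℝ) 1) (hirr : Irrational α) :
    ∀ n, 1 ≤ a α (n+1) := by
  intro n
  obtain ⟨_, h0, h1⟩ := G_good α hα hirr n
  have : (1:ℝ) ≤ (G α n)⁻¹ := le_of_lt ((one_lt_inv₀ h0).2 h1)
  exact Nat.le_floor (by exact_mod_cast this)

lemma q_one_le (α : ℝ) (ha : ∀ n, 1 ≤ a α (n+1)) : ∀ n, 1 ≤ q α n
  | 0 => le_refl 1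
  | 1 => ha 0
  | (n+2) => le_trans (q_one_le α ha n) (Nat.le_add_left _ _)

lemma q_mono (α : ℝ) (ha : ∀ n, 1 ≤ a α (n+1)) : Monotone (q α) := by
  apply monotone_nat_of_le_succ
  intro n
  match n with
  | 0 => exact ha 0
  | (k+1) =>
    rw [show q α (k+1+1) = a α (k+2) * q α (k+1) + q α k from rfl]
    calc q α (k+1) = 1 * q α (k+1) := (one_mul _).symm
    _ ≤ a α (k+2) * q α (k+1) := Nat.mul_le_mul_right _ (ha (k+1))
    _ ≤ _ := Nat.le_add_right _ _

lemma q_strict (α : ℝ) (ha : ∀ n, 1 ≤ a α (n+1)) :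
    ∀ m n, 1 ≤ m → m < n → q α m < q α n := by
  have step : ∀ k, q α (k+1) < q α (k+2) := by
    intro k
    rw [show q α (k+2) = a α (k+2) * q α (k+1) + q α k from rfl]
    have h1 := q_one_le α ha k
    have h2 : q α (k+1) ≤ a α (k+2) * q α (k+1) :=
      le_trans (le_of_eq (one_mul _).symm) (Nat.mul_le_mul_right _ (ha (k+1)))
    omega
  intro m n hm hmn
  induction n with
  | zero => omega
  | succ k ih =>
    rcases Nat.lt_or_ge m k with h | h
    · exact lt_of_lt_of_le (ih h) (q_mono α ha (Nat.le_succ k))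
    · have : m = k := by omega
      subst this
      obtain ⟨j, rfl⟩ := Nat.exists_eq_add_of_le' hm
      exact step j

lemma ncard_eq_filter (A : Set ℕ) (N : ℕ) [DecidablePred (· ∈ A)] :
    (A ∩ Set.Icc 1 N).ncard = ((Finset.Icc 1 N).filter (fun n => n ∈ A)).card := by
  rw [← Set.ncard_coe_finset]
  congr 1
  ext m
  simp only [Finset.coe_filter, Set.mem_inter_iff, Set.mem_setOf_eq, Finset.mem_Icc, Set.mem_Icc]
  tauto

lemma densityZero_transfer (A B : Set ℕ) (K C : ℕ) (hK : 1 ≤ K)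
    (h : ∀ N : ℕ, (A ∩ Set.Icc 1 N).ncard ≤ K * (B ∩ Set.Icc 1 (K * N + C)).ncard + C)
    (hB : DensityZero B) : DensityZero A := by
  have hcomp : Tendsto (fun N : ℕ => K * N + C) atTop atTop := by
    apply tendsto_atTop_mono (fun n => ?_) tendsto_id
    calc (id n : ℕ) = 1 * n := (one_mul n).symm
    _ ≤ K * n := Nat.mul_le_mul_right n hK
    _ ≤ K * n + C := Nat.le_add_right _ _
  have h1 : Tendsto (fun N : ℕ =>
      ((B ∩ Set.Icc 1 (K * N + C)).ncard : ℝ) / ((K * N + C : ℕ) : ℝ)) atTop (𝓝 0) :=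
    hB.comp hcomp
  have h2 : Tendsto (fun N : ℕ => ((K * N + C : ℕ) : ℝ) / (N : ℝ)) atTop (𝓝 K) := by
    have heq : ∀ᶠ N : ℕ in atTop, (K : ℝ) + C / N = ((K * N + C : ℕ) : ℝ) / (N : ℝ) := by
      filter_upwards [eventually_ge_atTop 1] with N hN
      have hN0 : (N : ℝ) ≠ 0 := by positivity
      push_cast
      field_simp
    have := (tendsto_const_nhds (x := (K:ℝ))).add (tendsto_const_div_atTop_nhds_zero_nat (C:ℝ))
    simpa using this.congr' heq
  have h3 : Tendsto (fun N : ℕ => (K : ℝ) *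
      (((B ∩ Set.Icc 1 (K * N + C)).ncard : ℝ) / ((K * N + C : ℕ) : ℝ)) *
      (((K * N + C : ℕ) : ℝ) / (N : ℝ)) + (C : ℝ) / N) atTop (𝓝 0) := by
    have := ((tendsto_const_nhds (x := (K:ℝ))).mul h1).mul h2
    have := (this.add (tendsto_const_div_atTop_nhds_zero_nat (C:ℝ)))
    simpa using this
  apply tendsto_of_tendsto_of_tendsto_of_le_of_le' tendsto_const_nhds h3
  · filter_upwards with N
    positivity
  · filter_upwards [eventually_ge_atTop 1] with N hN
    have hN0 : (0:ℝ) < (N : ℝ) := by exact_mod_cast hN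
    have hD : (0:ℝ) < ((K * N + C : ℕ) : ℝ) := by
      have : 1 ≤ K * N + C := by
        calc 1 ≤ K * N := Nat.one_le_iff_ne_zero.2 (by positivity)
        _ ≤ K * N + C := Nat.le_add_right _ _
      exact_mod_cast Nat.lt_of_lt_of_le Nat.zero_lt_one this
    have hineq : ((A ∩ Set.Icc 1 N).ncard : ℝ) ≤
        (K : ℝ) * ((B ∩ Set.Icc 1 (K * N + C)).ncard : ℝ) + C := by
      exact_mod_cast h N
    calc ((A ∩ Set.Icc 1 N).ncard : ℝ) / N
        ≤ ((K : ℝ) * ((B ∩ Set.Icc 1 (K * N + C)).ncard : ℝ) + C) / N := by gcongr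
    _ = (K : ℝ) * (((B ∩ Set.Icc 1 (K * N + C)).ncard : ℝ) / ((K * N + C : ℕ) : ℝ)) *
        (((K * N + C : ℕ) : ℝ) / (N : ℝ)) + (C : ℝ) / N := by
      field_simp

/-- **Proposition 3.3.** For bounded partial quotients, `t^s_(qₙ)(𝕋) = t^s_(xₙ)(𝕋)`. -/
theorem stmt_9 (α : ℝ) (hα : α ∈ Set.Ioo (0 : ℝ) 1) (hirr : Irrational α)
    (M : ℕ) (hbd : ∀ n, 1 ≤ n → a α n ≤ M)
    (x : ℕ → ℕ) (hmono : StrictMono x)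
    (hrange : Set.range x =
      {m : ℕ | ∃ n r : ℕ, 1 ≤ r ∧ r ≤ a α (n + 1) ∧ m = r * q α n}) :
    statCharSet (fun n => (q α n : ℤ)) = statCharSet (fun n => (x n : ℤ)) := by
  classical
  have ha : ∀ n, 1 ≤ a α (n+1) := a_one_le α hα hirr
  have hM1 : 1 ≤ M := le_trans (ha 0) (hbd 1 le_rfl)
  have haM : ∀ n, a α (n+1) ≤ M := fun n => hbd (n+1) (by omega)
  have spec : ∀ m, ∃ n r : ℕ, 1 ≤ r ∧ r ≤ a α (n+1) ∧ x m = r * q α n := by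
    intro m
    have : x m ∈ Set.range x := ⟨m, rfl⟩
    rw [hrange] at this
    exact this
  choose nf rf hr1 hr2 hxm using spec
  have gspec : ∀ n, ∃ m, x m = q α n := by
    intro n
    have : q α n ∈ Set.range x := by
      rw [hrange]; exact ⟨n, 1, le_rfl, ha n, (one_mul _).symm⟩
    exact this
  choose g hg using gspec
  have hq1 : ∀ n, 1 ≤ q α n := q_one_le α ha
  have hqmono := q_mono α ha
  have hqstrict := q_strict α ha
  have hqinj : ∀ m n, 1 ≤ m → 1 ≤ n → q α m = q α n → m = n := by
    intro m n hm hn he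
    rcases lt_trichotomy m n with h|h|h
    · exact absurd he (Nat.ne_of_lt (hqstrict m n hm h))
    · exact h
    · exact absurd he.symm (Nat.ne_of_lt (hqstrict n m hn h))
  have idx1 : ∀ m, nf m ≤ m + 1 := by
    intro m
    have hcard := Finset.card_le_card_of_injOn (s := Finset.Icc 1 (nf m))
      (t := Finset.Icc 0 m) g ?_ ?_
    · simpa [Nat.card_Icc] using hcard
    · intro k hk
      simp only [Finset.mem_coe, Finset.mem_Icc] at hk ⊢
      refine ⟨Nat.zero_le _, ?_⟩
      rw [← hmono.le_iff_le, hg]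
      calc q α k ≤ q α (nf m) := hqmono hk.2
      _ ≤ rf m * q α (nf m) := Nat.le_mul_of_pos_left _ (hr1 m)
      _ = x m := (hxm m).symm
    · intro k hk k' hk' he
      simp only [Finset.coe_Icc, Set.mem_Icc] at hk hk'
      apply hqinj k k' hk.1 hk'.1
      rw [← hg, ← hg, he]
  have qle : ∀ k n, q α k ≤ q α n → k ≤ n + 1 := by
    intro k n hkn
    by_contra hc
    push_neg at hc
    have h1 : (1:ℕ) ≤ max n 1 := le_max_right n 1
    have h2 : max n 1 < k := by omega
    have h3 := hqstrict (max n 1) k h1 h2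
    have h4 := hqmono (le_max_left n 1)
    omega
  have idx2 : ∀ n m, x m = q α n → m + 1 ≤ (n + 2) * M := by
    intro n m hxmq
    have hcard := Finset.card_le_card_of_injOn (s := Finset.Icc 0 m)
      (t := (Finset.Icc 0 (n+1)) ×ˢ (Finset.Icc 1 M)) (fun j => (nf j, rf j)) ?_ ?_
    · rw [Finset.card_product, Nat.card_Icc, Nat.card_Icc, Nat.card_Icc] at hcard
      simpa using hcard
    · intro j hj
      simp only [Finset.mem_coe, Finset.mem_Icc] at hj
      simp only [Finset.mem_coe, Finset.mem_product, Finset.mem_Icc]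
      have hqle : q α (nf j) ≤ q α n := by
        calc q α (nf j) ≤ rf j * q α (nf j) := Nat.le_mul_of_pos_left _ (hr1 j)
        _ = x j := (hxm j).symm
        _ ≤ x m := hmono.monotone hj.2
        _ = q α n := hxmq
      exact ⟨⟨Nat.zero_le _, qle _ _ hqle⟩, hr1 j, le_trans (hr2 j) (haM _)⟩
    · intro j _ j' _ he
      simp only [Prod.mk.injEq] at he
      apply hmono.injective
      rw [hxm, hxm, he.1, he.2]
  have hMpos : (0:ℝ) < M := by exact_mod_cast hM1
  ext y
  simp only [statCharSet, Set.mem_setOf_eq]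
  constructor
  · -- q-statistical ⟹ x-statistical
    intro hq ε hε
    refine densityZero_transfer _ {n : ℕ | ε / M ≤ ‖(q α n : ℤ) • y‖} M M hM1
      (fun N => ?_) (hq (ε/M) (div_pos hε hMpos))
    rw [ncard_eq_filter, ncard_eq_filter]
    set B := (Finset.Icc 1 (M * N + M)).filter
      (fun n => n ∈ {n : ℕ | ε / M ≤ ‖(q α n : ℤ) • y‖}) with hB
    set T := (Finset.Icc 1 N).filter
      (fun m => m ∈ {n : ℕ | ε ≤ ‖(fun n : ℕ => (x n : ℤ) • y) n‖}) with hT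
    have key : ∀ m, ε ≤ ‖(x m : ℤ) • y‖ → ε / M ≤ ‖(q α (nf m) : ℤ) • y‖ := by
      intro m hm
      have hsm : ((x m : ℤ)) • y = rf m • ((q α (nf m) : ℤ) • y) := by
        rw [hxm m, show ((rf m * q α (nf m) :ℕ):ℤ) = (rf m:ℤ) * (q α (nf m):ℤ) by
          push_cast; ring, mul_smul, natCast_zsmul]
      rw [div_le_iff₀ hMpos]
      calc ε ≤ ‖(x m : ℤ) • y‖ := hm
      _ = ‖rf m • ((q α (nf m) : ℤ) • y)‖ := by rw [hsm]
      _ ≤ rf m * ‖(q α (nf m) : ℤ) • y‖ := norm_nsmul_le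
      _ ≤ M * ‖(q α (nf m) : ℤ) • y‖ := by
        apply mul_le_mul_of_nonneg_right _ (norm_nonneg _)
        exact_mod_cast le_trans (hr2 m) (haM _)
      _ = ‖(q α (nf m) : ℤ) • y‖ * M := mul_comm _ _
    have step1 : T.card ≤ M * (T.image nf).card := by
      apply Finset.card_le_mul_card_image
      intro b _
      have := Finset.card_le_card_of_injOn (s := T.filter (fun m => nf m = b))
        (t := Finset.Icc 1 M) rf ?_ ?_
      · simpa [Nat.card_Icc] using this
      · intro j hj
        simp only [Finset.mem_coe, Finset.mem_Icc]
        exact ⟨hr1 j, le_trans (hr2 j) (haM _)⟩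
      · intro j hj j' hj' he
        simp only [Finset.coe_filter, Set.mem_setOf_eq] at hj hj'
        apply hmono.injective
        rw [hxm, hxm, he, hj.2, hj'.2]
    have step2 : T.image nf ⊆ insert 0 B := by
      intro b hb
      simp only [Finset.mem_image] at hb
      obtain ⟨m, hm, rfl⟩ := hb
      rw [hT] at hm
      simp only [Finset.mem_filter, Finset.mem_Icc, Set.mem_setOf_eq] at hm
      rcases Nat.eq_zero_or_pos (nf m) with h0 | h0
      · simp [h0]
      · apply Finset.mem_insert_of_mem
        rw [hB]
        simp only [Finset.mem_filter, Finset.mem_Icc, Set.mem_setOf_eq]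
        refine ⟨⟨h0, ?_⟩, key m hm.2⟩
        have := idx1 m
        have hmN := hm.1.2
        calc nf m ≤ m + 1 := idx1 m
        _ ≤ N + 1 := by omega
        _ ≤ M * N + M := by nlinarith
    calc T.card ≤ M * (T.image nf).card := step1
    _ ≤ M * (B.card + 1) := by
      apply Nat.mul_le_mul_left
      exact le_trans (Finset.card_le_card step2) (Finset.card_insert_le _ _)
    _ = M * B.card + M := by ring
  · -- x-statistical ⟹ q-statistical
    intro hx ε hε
    refine densityZero_transfer _ {m : ℕ | ε ≤ ‖(x m : ℤ) • y‖} M (2*M+1) hM1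
      (fun N => ?_) (hx ε hε)
    rw [ncard_eq_filter, ncard_eq_filter]
    set B := (Finset.Icc 1 (M * N + (2*M+1))).filter
      (fun m => m ∈ {m : ℕ | ε ≤ ‖(x m : ℤ) • y‖}) with hB
    set T := (Finset.Icc 1 N).filter
      (fun n => n ∈ {n : ℕ | ε ≤ ‖(fun n : ℕ => (q α n : ℤ) • y) n‖}) with hT
    have hsub : T.card ≤ (insert 0 B).card := by
      apply Finset.card_le_card_of_injOn g
      · intro n hn
        rw [hT] at hn
        simp only [Finset.mem_coe, Finset.mem_filter, Finset.mem_Icc, Set.mem_setOf_eq] at hn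
        rcases Nat.eq_zero_or_pos (g n) with h0 | h0
        · simp [h0]
        · apply Finset.mem_insert_of_mem
          rw [hB]
          simp only [Finset.mem_filter, Finset.mem_Icc, Set.mem_setOf_eq]
          have hgb : g n + 1 ≤ (n + 2) * M := idx2 n (g n) (hg n)
          have hnN : n ≤ N := hn.1.2
          refine ⟨⟨h0, ?_⟩, ?_⟩
          · have : (n + 2) * M ≤ (N + 2) * M := Nat.mul_le_mul_right M (by omega)
            have : (N + 2) * M = M * N + 2 * M := by ring
            nlinarith [Nat.mul_le_mul_right M (show n + 2 ≤ N + 2 by omega)]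
          · show ε ≤ ‖(x (g n) : ℤ) • y‖
            rw [hg n]
            exact hn.2
      · intro n hn n' hn' he
        simp only [hT, Finset.coe_filter, Finset.mem_Icc, Set.mem_setOf_eq] at hn hn'
        apply hqinj n n' hn.1.1 hn'.1.1
        rw [← hg, ← hg, he]
    calc T.card ≤ (insert 0 B).card := hsub
    _ ≤ B.card + 1 := Finset.card_insert_le _ _
    _ ≤ M * B.card + (2*M+1) := by nlinarith
end
end
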